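/- arXiv:2510.18529 — 9 statements merged into one kernel-verified Lean document; each statement's English description precedes it below -/
import Mathlib

section
/- Let n ≥ 4 be an integer divisible by 2 or by 3. Then the circular sorting number satisfies t(n) ≤ n − 3. -/
/-- `cyc σ` is the number of cycles in the cycle decomposition of the permutation `σ`,
counting fixed points as cycles; i.e., the number of orbits of `σ`. -/
noncomputable def cyc {α : Type*} (σ : Equiv.Perm α) : ℕ :=
  Nat.card (Quotient (Setoid.mk σ.SameCycle
    ⟨fun x => Equiv.Perm.SameCycle.refl σ x, fun h => h.symm, fun h h' => h.trans h'⟩))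

/-- `t(π) = n - cyc(π)`, the minimum number of transpositions whose product is `π`. -/
noncomputable def tPerm {n : ℕ} (π : Equiv.Perm (ZMod n)) : ℕ := n - cyc π

/-- `t([π])`, the minimum of `t(π ∘ c^k)` over `k ∈ ℤ_n`, where `c : x ↦ x + 1`. -/
noncomputable def tCoset {n : ℕ} (π : Equiv.Perm (ZMod n)) : ℕ :=
  sInf { m : ℕ | ∃ k : ZMod n, m = tPerm (π * Equiv.addRight k) }

/-- The circular sorting number `t(n)`, the maximum of `t([π])` over `π ∈ S(ℤ_n)`. -/
noncomputable def tCirc (n : ℕ) : ℕ :=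
  sSup { m : ℕ | ∃ π : Equiv.Perm (ZMod n), m = tCoset π }

section Aux

variable {α : Type*}

lemma eq_of_sameCycle_fixed {σ : Equiv.Perm α} {x w : α} (hx : σ x = x)
    (h : σ.SameCycle x w) : w = x := by
  obtain ⟨i, hi⟩ := h
  rw [← hi, Equiv.Perm.zpow_apply_eq_self_of_apply_eq_self hx i]

lemma mem_of_sameCycle_swap {σ : Equiv.Perm α} {y z w : α} (hy : σ y = z) (hz : σ z = y)
    (h : σ.SameCycle y w) : w = y ∨ w = z := by
  obtain ⟨i, hi⟩ := h
  suffices H : ∀ j : ℤ, (σ ^ j) y = y ∨ (σ ^ j) y = z by rw [← hi]; exact H i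
  intro j
  induction j using Int.induction_on with
  | zero => left; simp
  | succ i ih =>
      have hs : σ ^ ((i : ℤ) + 1) = σ * σ ^ (i : ℤ) := by
        rw [add_comm, zpow_one_add]
      rw [hs, Equiv.Perm.mul_apply]
      rcases ih with h' | h' <;> rw [h']
      · right; exact hy
      · left; exact hz
  | pred i ih =>
      have hs : σ ^ (-(i : ℤ) - 1) = σ⁻¹ * σ ^ (-(i : ℤ)) := by
        rw [sub_eq_add_neg, add_comm, ← zpow_neg_one, ← zpow_add]
      rw [hs, Equiv.Perm.mul_apply]
      have hinvy : σ⁻¹ y = z := by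
        rw [Equiv.Perm.inv_eq_iff_eq]; exact hz.symm
      have hinvz : σ⁻¹ z = y := by
        rw [Equiv.Perm.inv_eq_iff_eq]; exact hy.symm
      rcases ih with h' | h' <;> rw [h']
      · right; exact hinvy
      · left; exact hinvz

lemma three_le_cyc_of [Finite α] {σ : Equiv.Perm α} {x y w : α}
    (hxy : ¬ σ.SameCycle x y) (hxw : ¬ σ.SameCycle x w) (hyw : ¬ σ.SameCycle y w) :
    3 ≤ cyc σ := by
  classical
  set s : Setoid α := Setoid.mk σ.SameCycle
    ⟨fun x => Equiv.Perm.SameCycle.refl σ x, fun h => h.symm, fun h h' => h.trans h'⟩ with hs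
  have key : Function.Injective
      (![Quotient.mk s x, Quotient.mk s y, Quotient.mk s w] : Fin 3 → Quotient s) := by
    intro i j hij
    fin_cases i <;> fin_cases j <;> simp only [Matrix.cons_val_zero, Matrix.cons_val_one,
      Matrix.head_cons, Matrix.cons_val_two, Matrix.tail_cons] at hij <;>
      first
        | rfl
        | (exact absurd (Quotient.exact hij) hxy)
        | (exact absurd ((Quotient.exact hij) : σ.SameCycle y x).symm hxy)
        | (exact absurd (Quotient.exact hij) hxw)
        | (exact absurd ((Quotient.exact hij) : σ.SameCycle w x).symm hxw)
        | (exact absurd (Quotient.exact hij) hyw)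
        | (exact absurd ((Quotient.exact hij) : σ.SameCycle w y).symm hyw)
  have hcard := Nat.card_le_card_of_injective _ key
  simpa [cyc] using hcard

lemma exists_ne_two [Finite α] (h : 3 ≤ Nat.card α) (x y : α) :
    ∃ w : α, w ≠ x ∧ w ≠ y := by
  classical
  cases nonempty_fintype α
  by_contra hc
  push_neg at hc
  have hsub : (Finset.univ : Finset α) ⊆ {x, y} := by
    intro w _
    rcases eq_or_ne w x with rfl | hwx
    · simp
    · simp [hc w hwx]
  have h2 : Fintype.card α ≤ ({x, y} : Finset α).card := Finset.card_le_card hsub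
  have h3 : ({x, y} : Finset α).card ≤ 2 := by
    refine le_trans (Finset.card_insert_le x {y}) ?_
    simp
  rw [Nat.card_eq_fintype_card] at h
  omega

lemma exists_ne_three [Finite α] (h : 4 ≤ Nat.card α) (x y z : α) :
    ∃ w : α, w ≠ x ∧ w ≠ y ∧ w ≠ z := by
  classical
  cases nonempty_fintype α
  by_contra hc
  push_neg at hc
  have hsub : (Finset.univ : Finset α) ⊆ {x, y, z} := by
    intro w _
    rcases eq_or_ne w x with rfl | hwx
    · simp
    · rcases eq_or_ne w y with rfl | hwy
      · simp
      · simp [hc w hwx hwy]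
  have h2 : Fintype.card α ≤ ({x, y, z} : Finset α).card := Finset.card_le_card hsub
  have h3 : ({x, y, z} : Finset α).card ≤ 3 := by
    refine le_trans (Finset.card_insert_le x {y, z}) ?_
    have := Finset.card_insert_le y ({z} : Finset α)
    simp at this ⊢
    omega
  rw [Nat.card_eq_fintype_card] at h
  omega

/-- Two distinct fixed points force at least 3 cycles (when there are ≥ 3 points). -/
lemma three_le_cyc_of_two_fixed [Finite α] {σ : Equiv.Perm α} {x y : α}
    (hx : σ x = x) (hy : σ y = y) (hxy : x ≠ y) (h3 : 3 ≤ Nat.card α) : 3 ≤ cyc σ := by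
  obtain ⟨w, hwx, hwy⟩ := exists_ne_two h3 x y
  refine three_le_cyc_of (x := x) (y := y) (w := w) ?_ ?_ ?_
  · intro h; exact hxy (eq_of_sameCycle_fixed hx h).symm
  · intro h; exact hwx (eq_of_sameCycle_fixed hx h)
  · intro h; exact hwy (eq_of_sameCycle_fixed hy h)

/-- A fixed point plus a 2-cycle force at least 3 cycles (when there are ≥ 4 points). -/
lemma three_le_cyc_of_fixed_and_swap [Finite α] {σ : Equiv.Perm α} {x y z : α}
    (hx : σ x = x) (hy : σ y = z) (hz : σ z = y)
    (hxy : x ≠ y) (hxz : x ≠ z) (hyz : y ≠ z) (h4 : 4 ≤ Nat.card α) : 3 ≤ cyc σ := by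
  obtain ⟨w, hwx, hwy, hwz⟩ := exists_ne_three h4 x y z
  refine three_le_cyc_of (x := x) (y := y) (w := w) ?_ ?_ ?_
  · intro h; exact hxy (eq_of_sameCycle_fixed hx h).symm
  · intro h; exact hwx (eq_of_sameCycle_fixed hx h)
  · intro h
    rcases mem_of_sameCycle_swap hy hz h with rfl | rfl
    · exact hwy rfl
    · exact hwz rfl

end Aux

section SumsZMod

/-- Sums over `ZMod n` can be computed as sums over `Finset.range n`. -/
lemma zmod_sum_eq_range {n : ℕ} [NeZero n] (F : ZMod n → ZMod n) :
    ∑ x : ZMod n, F x = ∑ i ∈ Finset.range n, F (i : ZMod n) := by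
  have hb : Function.Bijective (fun i : Fin n => ((i : ℕ) : ZMod n)) := by
    have hinj : Function.Injective (fun i : Fin n => ((i : ℕ) : ZMod n)) := by
      intro i j hij
      have hi := ZMod.val_cast_of_lt i.isLt
      have hj := ZMod.val_cast_of_lt j.isLt
      have hv : ((i : ℕ) : ZMod n).val = ((j : ℕ) : ZMod n).val := by
        simp only at hij
        rw [hij]
      rw [hi, hj] at hv
      exact Fin.ext hv
    refine ⟨hinj, ?_⟩
    have := Fintype.bijective_iff_injective_and_card (fun i : Fin n => ((i : ℕ) : ZMod n))
    exact (this.mpr ⟨hinj, by simp [ZMod.card]⟩).2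
  have h1 : ∑ x : ZMod n, F x = ∑ i : Fin n, F ((i : ℕ) : ZMod n) :=
    (Function.Bijective.sum_comp hb F).symm
  rw [h1, Fin.sum_univ_eq_sum_range (fun i => F ((i : ℕ) : ZMod n))]

lemma six_mul_sum_range_sq (N : ℕ) :
    6 * ∑ i ∈ Finset.range (N + 1), i ^ 2 = N * (N + 1) * (2 * N + 1) := by
  induction N with
  | zero => simp
  | succ N ih =>
      rw [Finset.sum_range_succ, Nat.mul_add, ih]
      ring

end SumsZMod

/-- Core lemma: for `n ≥ 4` divisible by 2 or by 3, every permutation of `ZMod n` admits a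
shift `k` such that `π ∘ c^k` has at least 3 cycles. -/
lemma exists_three_le_cyc (n : ℕ) (hn : 4 ≤ n) (hdvd : 2 ∣ n ∨ 3 ∣ n)
    (π : Equiv.Perm (ZMod n)) : ∃ k : ZMod n, 3 ≤ cyc (π * Equiv.addRight k) := by
  haveI : NeZero n := ⟨by omega⟩
  by_contra hcon
  push_neg at hcon
  have hcard : Nat.card (ZMod n) = n := by
    rw [Nat.card_eq_fintype_card, ZMod.card]
  have hσ : ∀ (k x : ZMod n), (π * Equiv.addRight k) x = π (x + k) := fun k x => rfl
  -- the two difference/sum maps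
  set a : ZMod n → ZMod n := fun x => π⁻¹ x with ha
  set h : ZMod n → ZMod n := fun x => a x - x with hh
  set g : ZMod n → ZMod n := fun x => a x + x with hg
  have hfix : ∀ x : ZMod n, (π * Equiv.addRight (h x)) x = x := by
    intro x
    rw [hσ]
    have hx : x + (a x - x) = a x := by ring
    rw [hh]
    simp only []
    rw [hx, ha]
    exact π.apply_symm_apply x
  -- h is injective, hence bijective
  have hinj : Function.Injective h := by
    intro x y hxy
    by_contra hne
    have hfy : (π * Equiv.addRight (h x)) y = y := by rw [hxy]; exact hfix y
    have := three_le_cyc_of_two_fixed (hfix x) hfy hne (by omega)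
    exact absurd this (by have := hcon (h x); omega)
  have hhbij : Function.Bijective h := Finite.injective_iff_bijective.mp hinj
  -- g is injective, hence bijective
  have ginj : Function.Injective g := by
    intro x y hgxy
    by_contra hne
    have hk : a x - y = a y - x := by
      have : a x + x = a y + y := hgxy
      linear_combination this
    set k : ZMod n := a y - x with hkdef
    have hxk : (π * Equiv.addRight k) x = y := by
      rw [hσ]
      have : x + (a y - x) = a y := by ring
      rw [hkdef, this, ha]
      exact π.apply_symm_apply y
    have hyk : (π * Equiv.addRight k) y = x := by
      rw [hσ]
      have h2 : y + k = a x := by linear_combination -hk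
      rw [h2, ha]
      exact π.apply_symm_apply x
    obtain ⟨z, hz⟩ := hhbij.surjective k
    have hzfix : (π * Equiv.addRight k) z = z := by rw [← hz]; exact hfix z
    have hzx : z ≠ x := by
      rintro rfl
      exact hne (hxk.symm.trans hzfix).symm
    have hzy : z ≠ y := by
      rintro rfl
      exact hne (hyk.symm.trans hzfix)
    have := three_le_cyc_of_fixed_and_swap hzfix hxk hyk hzx hzy hne (by omega)
    exact absurd this (by have := hcon k; omega)
  have hgbij : Function.Bijective g := Finite.injective_iff_bijective.mp ginj
  -- sum computations
  set S : ZMod n := ∑ x : ZMod n, x with hS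
  set T : ZMod n := ∑ x : ZMod n, x ^ 2 with hT
  have habij : Function.Bijective a := by
    rw [ha]; exact π⁻¹.bijective
  have hsa : ∑ x : ZMod n, a x = S := Function.Bijective.sum_comp habij (fun x => x)
  have hsa2 : ∑ x : ZMod n, (a x) ^ 2 = T := Function.Bijective.sum_comp habij (fun x => x ^ 2)
  have hg1 : ∑ x : ZMod n, g x = S := Function.Bijective.sum_comp hgbij (fun x => x)
  have hg2 : ∑ x : ZMod n, (g x) ^ 2 = T := Function.Bijective.sum_comp hgbij (fun x => x ^ 2)
  have hh2 : ∑ x : ZMod n, (h x) ^ 2 = T := Function.Bijective.sum_comp hhbij (fun x => x ^ 2)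
  -- S = 0
  have hS0 : S = 0 := by
    have hsplit : ∑ x : ZMod n, g x = (∑ x : ZMod n, a x) + ∑ x : ZMod n, x := by
      rw [hg]; exact Finset.sum_add_distrib
    rw [hg1, hsa, ← hS] at hsplit
    linear_combination -hsplit
  -- 2T = 0
  have hT0 : T + T = 0 := by
    have hsplit : (∑ x : ZMod n, (g x) ^ 2) + ∑ x : ZMod n, (h x) ^ 2
        = 2 * (∑ x : ZMod n, (a x) ^ 2) + 2 * ∑ x : ZMod n, x ^ 2 := by
      rw [hg, hh, ← Finset.sum_add_distrib, Finset.mul_sum, Finset.mul_sum,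
        ← Finset.sum_add_distrib]
      apply Finset.sum_congr rfl
      intro x _
      ring
    rw [hg2, hh2, hsa2, ← hT] at hsplit
    linear_combination -hsplit
  -- translate to ℕ divisibility
  have hScast : S = ((∑ i ∈ Finset.range n, i : ℕ) : ZMod n) := by
    rw [hS, zmod_sum_eq_range (fun x => x), Nat.cast_sum]
  have hTcast : T = ∑ i ∈ Finset.range n, ((i : ZMod n)) ^ 2 := by
    rw [hT, zmod_sum_eq_range (fun x => x ^ 2)]
  rcases hdvd with h2 | h3
  · -- n even : contradiction from S = 0
    have hdvdS : n ∣ ∑ i ∈ Finset.range n, i := by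
      rw [← ZMod.natCast_eq_zero_iff, ← hScast]
      exact hS0
    obtain ⟨c, hc⟩ := hdvdS
    have hmul := Finset.sum_range_id_mul_two n
    rw [hc] at hmul
    have hcancel : n * (2 * c) = n * (n - 1) := by
      rw [← hmul]; ring
    have : 2 * c = n - 1 := Nat.eq_of_mul_eq_mul_left (by omega) hcancel
    omega
  · -- 3 ∣ n : contradiction from T + T = 0
    have hdvdT : n ∣ 2 * ∑ i ∈ Finset.range n, i ^ 2 := by
      rw [← ZMod.natCast_eq_zero_iff]
      push_cast
      rw [← hTcast]
      linear_combination hT0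
    obtain ⟨c, hc⟩ := hdvdT
    obtain ⟨N, rfl⟩ : ∃ N, n = N + 1 := ⟨n - 1, by omega⟩
    have h6 := six_mul_sum_range_sq N
    have hcancel : (N + 1) * (3 * c) = (N + 1) * (N * (2 * N + 1)) := by
      have : 3 * (2 * ∑ i ∈ Finset.range (N + 1), i ^ 2) = 6 * ∑ i ∈ Finset.range (N + 1), i ^ 2 := by
        ring
      rw [hc] at this
      rw [h6] at this
      calc (N + 1) * (3 * c) = 3 * ((N + 1) * c) := by ring
        _ = N * (N + 1) * (2 * N + 1) := this
        _ = (N + 1) * (N * (2 * N + 1)) := by ring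
    have heq : 3 * c = N * (2 * N + 1) := Nat.eq_of_mul_eq_mul_left (by omega) hcancel
    obtain ⟨q, hq⟩ : ∃ q, N = 3 * q + 2 := ⟨N / 3, by omega⟩
    have hNN : N * (2 * N + 1) = 18 * (q * q) + 27 * q + 10 := by
      rw [hq]; ring
    rw [hNN] at heq
    set w := q * q with hw
    omega

theorem tCirc_le_of_dvd_two_or_three (n : ℕ) (hn : 4 ≤ n) (hdvd : 2 ∣ n ∨ 3 ∣ n) :
    tCirc n ≤ n - 3 := by
  haveI : NeZero n := ⟨by omega⟩
  apply csSup_le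
  · exact ⟨tCoset (1 : Equiv.Perm (ZMod n)), ⟨1, rfl⟩⟩
  · rintro m ⟨π, rfl⟩
    obtain ⟨k, hk⟩ := exists_three_le_cyc n hn hdvd π
    have hmem : tPerm (π * Equiv.addRight k) ∈
        { m : ℕ | ∃ k : ZMod n, m = tPerm (π * Equiv.addRight k) } := ⟨k, rfl⟩
    refine le_trans (Nat.sInf_le hmem) ?_
    unfold tPerm
    omega
end

section
/- Let n, m ≥ 2 be integers. Then t(nm) ≥ n·t(m) + t(n). -/
namespace TC

open Equiv Equiv.Perm

variable {α γ : Type*}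

def cycSetoid (σ : Equiv.Perm α) : Setoid α :=
  Setoid.mk σ.SameCycle
    ⟨fun x => Equiv.Perm.SameCycle.refl σ x, fun h => h.symm, fun h h' => h.trans h'⟩

lemma cyc_def (σ : Equiv.Perm α) : cyc σ = Nat.card (Quotient (cycSetoid σ)) := rfl

lemma cyc_le_card [Finite α] (σ : Equiv.Perm α) : cyc σ ≤ Nat.card α := by
  rw [cyc_def]
  exact Nat.card_le_card_of_surjective _ (Quotient.mk''_surjective)

lemma one_le_cyc [Finite α] [Nonempty α] (σ : Equiv.Perm α) : 1 ≤ cyc σ := by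
  rw [cyc_def]
  haveI : Nonempty (Quotient (cycSetoid σ)) := ⟨Quotient.mk'' (Classical.arbitrary α)⟩
  exact Nat.card_pos

lemma card_subtype_ne [Finite α] (a : α) : Nat.card {x : α // x ≠ a} = Nat.card α - 1 := by
  classical
  haveI := Fintype.ofFinite α
  rw [Nat.card_eq_fintype_card, Nat.card_eq_fintype_card]
  have : Fintype.card {x : α // ¬ x = a} = Fintype.card α - Fintype.card {x : α // x = a} :=
    Fintype.card_subtype_compl _
  simpa [Fintype.card_subtype_eq] using this

lemma fst_pow {g : Perm (α × γ)} {b : Perm α} (hb : ∀ x, (g x).1 = b x.1) :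
    ∀ (t : ℕ) (x : α × γ), ((g ^ t) x).1 = (b ^ t) x.1 := by
  intro t
  induction t with
  | zero => intro x; simp
  | succ t ih =>
    intro x
    rw [pow_succ', pow_succ', Equiv.Perm.mul_apply, Equiv.Perm.mul_apply, hb, ih]

lemma sameCycle_fst [Finite α] [Finite γ] {g : Perm (α × γ)} {b : Perm α}
    (hb : ∀ x, (g x).1 = b x.1) {x y : α × γ} (h : g.SameCycle x y) :
    b.SameCycle x.1 y.1 := by
  obtain ⟨t, -, ht⟩ := h.exists_pow_eq'
  exact ⟨t, by rw [zpow_natCast, ← fst_pow hb, ht]⟩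

lemma cyc_skew_le [Finite α] [Finite γ] (g : Perm (α × γ)) (b : Perm α)
    (hb : ∀ x, (g x).1 = b x.1) (j₀ : α) (ℓ : ℕ) (ψ : Perm γ)
    (hψ : ∀ i, (g ^ ℓ) (j₀, i) = (j₀, ψ i)) :
    cyc g ≤ cyc ψ + (cyc b - 1) * Nat.card γ := by
  classical
  letI sG := cycSetoid g
  letI sb := cycSetoid b
  letI sψ := cycSetoid ψ
  -- the projection onto base cycles
  let pr : Quotient sG → Quotient sb :=
    Quotient.map' Prod.fst (fun x y h => sameCycle_fst hb h)
  have pr_mk : ∀ x : α × γ, pr (Quotient.mk'' x) = Quotient.mk'' x.1 := fun _ => rfl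
  let p : Quotient sG → Prop := fun q => pr q = Quotient.mk'' j₀
  have hGpow : ∀ (w : ℕ) (i : γ), (g ^ (ℓ * w)) (j₀, i) = (j₀, (ψ ^ w) i) := by
    intro w
    induction w with
    | zero => intro i; simp
    | succ w ih =>
      intro i
      rw [Nat.mul_succ, pow_add, Equiv.Perm.mul_apply, hψ, ih, pow_succ,
        Equiv.Perm.mul_apply]
  -- splitting
  have hsplit : cyc g = Nat.card {q : Quotient sG // p q} + Nat.card {q : Quotient sG // ¬ p q} := by
    rw [cyc_def, ← Nat.card_sum, Nat.card_congr (Equiv.sumCompl p)]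
  have h1 : Nat.card {q : Quotient sG // p q} ≤ cyc ψ := by
    rw [cyc_def]
    have wd : ∀ i i' : γ, ψ.SameCycle i i' → g.SameCycle (j₀, i) (j₀, i') := by
      intro i i' h
      obtain ⟨w, -, hw⟩ := h.exists_pow_eq'
      exact ⟨(ℓ * w : ℕ), by rw [zpow_natCast, hGpow, hw]⟩
    let F0 : Quotient sψ → Quotient sG := Quotient.map' (fun i => (j₀, i)) (fun i i' h => wd i i' h)
    have hF0 : ∀ qi, p (F0 qi) := by
      intro qi
      induction qi using Quotient.inductionOn' with
      | h i => exact pr_mk (j₀, i)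
    apply Nat.card_le_card_of_surjective (fun qi => (⟨F0 qi, hF0 qi⟩ : {q : Quotient sG // p q}))
    rintro ⟨q, hq⟩
    induction q using Quotient.inductionOn' with
    | h x =>
      have hx : b.SameCycle x.1 j₀ := Quotient.exact' hq
      obtain ⟨t, -, ht⟩ := hx.exists_pow_eq'
      refine ⟨Quotient.mk'' ((g ^ t) x).2, Subtype.ext ?_⟩
      have hy1 : ((g ^ t) x).1 = j₀ := by rw [fst_pow hb, ht]
      show Quotient.mk'' (j₀, ((g ^ t) x).2) = Quotient.mk'' x
      have he : (j₀, ((g ^ t) x).2) = (g ^ t) x := by rw [← hy1]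
      rw [he]
      exact Quotient.sound' (Equiv.Perm.SameCycle.symm ⟨t, by rw [zpow_natCast]⟩)
  have h2 : Nat.card {q : Quotient sG // ¬ p q} ≤ (cyc b - 1) * Nat.card γ := by
    have hcard : Nat.card ({qb : Quotient sb // qb ≠ Quotient.mk'' j₀} × γ)
        = (cyc b - 1) * Nat.card γ := by
      rw [Nat.card_prod, card_subtype_ne, cyc_def]
    rw [← hcard]
    have hprf : ∀ (qb : {qb : Quotient sb // qb ≠ Quotient.mk'' j₀}) (i : γ),
        ¬ p (Quotient.mk'' ((qb : Quotient sb).out, i)) := by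
      rintro ⟨qb, hqb⟩ i hcon
      apply hqb
      rw [← qb.out_eq']
      exact hcon
    apply Nat.card_le_card_of_surjective
      (fun pc : {qb : Quotient sb // qb ≠ Quotient.mk'' j₀} × γ =>
        (⟨Quotient.mk'' ((pc.1 : Quotient sb).out, pc.2), hprf pc.1 pc.2⟩ :
          {q : Quotient sG // ¬ p q}))
    rintro ⟨q, hq⟩
    induction q using Quotient.inductionOn' with
    | h x =>
      have hqb : (Quotient.mk'' x.1 : Quotient sb) ≠ Quotient.mk'' j₀ := hq
      have hx : b.SameCycle x.1 (Quotient.mk'' x.1 : Quotient sb).out := by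
        have h' := Quotient.exact' (s₁ := sb) (Quotient.out_eq' (Quotient.mk'' x.1)).symm
        exact h'
      obtain ⟨t, -, ht⟩ := hx.exists_pow_eq'
      refine ⟨(⟨Quotient.mk'' x.1, hqb⟩, ((g ^ t) x).2), Subtype.ext ?_⟩
      have hy1 : ((g ^ t) x).1 = (Quotient.mk'' x.1 : Quotient sb).out := by
        rw [fst_pow hb, ht]
      show Quotient.mk'' ((Quotient.mk'' x.1 : Quotient sb).out, ((g ^ t) x).2)
        = Quotient.mk'' x
      have he : ((Quotient.mk'' x.1 : Quotient sb).out, ((g ^ t) x).2) = (g ^ t) x := by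
        rw [← hy1]
      rw [he]
      exact Quotient.sound' (Equiv.Perm.SameCycle.symm ⟨t, by rw [zpow_natCast]⟩)
  rw [hsplit]
  exact Nat.add_le_add h1 h2



section Digits

variable (n m : ℕ) [NeZero n] [NeZero m]

instance : NeZero (n * m) := ⟨mul_ne_zero (NeZero.ne n) (NeZero.ne m)⟩

lemma digit_lt (j : ZMod m) (i : ZMod n) : j.val + m * i.val < n * m := by
  have hj := ZMod.val_lt j
  have hi := ZMod.val_lt i
  have h1 : m * i.val ≤ m * (n - 1) := Nat.mul_le_mul_left m (by omega)
  have h2 : m * (n - 1) + m = n * m := by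
    obtain ⟨n', rfl⟩ : ∃ n', n = n' + 1 := ⟨n - 1, by have := NeZero.pos n; omega⟩
    rw [Nat.add_sub_cancel]
    ring
  omega

def digitEquiv : ZMod (n * m) ≃ ZMod m × ZMod n where
  toFun x := ((x.val : ZMod m), ((x.val / m : ℕ) : ZMod n))
  invFun p := ((p.1.val + m * p.2.val : ℕ) : ZMod (n * m))
  left_inv x := by
    have hm := NeZero.pos m
    have hx := ZMod.val_lt x
    have h1 : ((x.val : ZMod m)).val = x.val % m := ZMod.val_natCast m x.val
    have h2 : (((x.val / m : ℕ) : ZMod n)).val = x.val / m := by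
      apply ZMod.val_cast_of_lt
      exact (Nat.div_lt_iff_lt_mul hm).mpr hx
    simp only [h1, h2]
    rw [Nat.mod_add_div]
    exact ZMod.natCast_rightInverse x
  right_inv p := by
    obtain ⟨j, i⟩ := p
    have hm := NeZero.pos m
    have hX : j.val + m * i.val < n * m := digit_lt n m j i
    have hval : (((j.val + m * i.val : ℕ) : ZMod (n * m))).val = j.val + m * i.val :=
      ZMod.val_cast_of_lt hX
    have hfst : ((j.val + m * i.val : ℕ) : ZMod m) = j := by
      push_cast
      simp [ZMod.natCast_self, ZMod.natCast_rightInverse j]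
    have hsnd : (((j.val + m * i.val) / m : ℕ) : ZMod n) = i := by
      rw [Nat.add_mul_div_left _ _ hm, Nat.div_eq_of_lt (ZMod.val_lt j)]
      simp [ZMod.natCast_rightInverse i]
    show ((((j.val + m * i.val : ℕ) : ZMod (n*m)).val : ZMod m),
      (((((j.val + m * i.val : ℕ) : ZMod (n*m)).val / m : ℕ)) : ZMod n)) = (j, i)
    rw [hval, hfst, hsnd]

lemma digitEquiv_symm_apply (j : ZMod m) (i : ZMod n) :
    (digitEquiv n m).symm (j, i) = ((j.val + m * i.val : ℕ) : ZMod (n * m)) := rfl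

lemma digit_shift (j : ZMod m) (i : ZMod n) (k : ZMod (n * m)) :
    digitEquiv n m ((digitEquiv n m).symm (j, i) + k)
      = (j + ((k.val : ℕ) : ZMod m), i + (((j.val + k.val) / m : ℕ) : ZMod n)) := by
  have hm := NeZero.pos m
  obtain ⟨X, hXdef⟩ : ∃ X : ℕ, X = j.val + m * i.val := ⟨_, rfl⟩
  obtain ⟨Y, hYdef⟩ : ∃ Y : ℕ, Y = X + k.val := ⟨_, rfl⟩
  have hsum : (digitEquiv n m).symm (j, i) + k = ((Y : ℕ) : ZMod (n * m)) := by
    rw [digitEquiv_symm_apply, ← hXdef]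
    have h1 : ((Y : ℕ) : ZMod (n*m)) = ((X : ℕ) : ZMod (n*m)) + ((k.val : ℕ) : ZMod (n*m)) := by
      rw [hYdef, Nat.cast_add]
    rw [h1, ZMod.natCast_rightInverse k]
  rw [hsum]
  have hvalY : ((Y : ZMod (n * m))).val = Y % (n * m) := ZMod.val_natCast (n * m) Y
  obtain ⟨q, hq⟩ : ∃ q : ℕ, q = Y / (n * m) := ⟨_, rfl⟩
  have hdm : (n * m) * q + Y % (n * m) = Y := by rw [hq]; exact Nat.div_add_mod Y (n * m)
  -- first component
  have hfst : ((Y % (n * m) : ℕ) : ZMod m) = j + ((k.val : ℕ) : ZMod m) := by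
    have h0 : ((n * m * q : ℕ) : ZMod m) = 0 := by
      rw [ZMod.natCast_eq_zero_iff]
      exact Dvd.dvd.mul_right (Dvd.dvd.mul_left dvd_rfl n) q
    have : ((Y : ℕ) : ZMod m) = ((n * m * q : ℕ) : ZMod m) + ((Y % (n*m) : ℕ) : ZMod m) := by
      rw [← Nat.cast_add, hdm]
    rw [h0, zero_add] at this
    rw [← this, hYdef, hXdef]
    push_cast
    simp [ZMod.natCast_self, ZMod.natCast_rightInverse j]
  -- second component
  have hsnd : (((Y % (n * m)) / m : ℕ) : ZMod n) = i + (((j.val + k.val) / m : ℕ) : ZMod n) := by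
    have hle : m * (n * q) ≤ Y := by
      have : n * m * q = m * (n * q) := by ring
      omega
    have hsub : Y % (n * m) = Y - m * (n * q) := by
      have : n * m * q = m * (n * q) := by ring
      omega
    have hdiv : (Y - m * (n * q)) / m = Y / m - n * q := Nat.sub_mul_div Y m (n * q)
    have hle2 : n * q ≤ Y / m := (Nat.le_div_iff_mul_le hm).mpr (by
      calc n * q * m = m * (n * q) := by ring
        _ ≤ Y := hle)
    have hYm : Y / m = (j.val + k.val) / m + i.val := by
      have hY' : Y = (j.val + k.val) + m * i.val := by rw [hYdef, hXdef]; ring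
      rw [hY', Nat.add_mul_div_left _ _ hm]
    rw [hsub, hdiv]
    have : ((Y / m - n * q : ℕ) : ZMod n) = ((Y / m : ℕ) : ZMod n) - ((n * q : ℕ) : ZMod n) := by
      rw [Nat.cast_sub hle2]
    rw [this]
    have h0 : ((n * q : ℕ) : ZMod n) = 0 := by
      rw [ZMod.natCast_eq_zero_iff]
      exact Dvd.intro q rfl
    rw [h0, sub_zero, hYm]
    push_cast
    rw [ZMod.natCast_rightInverse i]
    ring
  show (((Y : ZMod (n*m)).val : ZMod m), (((Y : ZMod (n*m)).val / m : ℕ) : ZMod n)) = _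
  rw [hvalY, hfst, hsnd]

end Digits

variable {β : Type*}

-- conjugation invariance of cyc
def permCongrMul (e : α ≃ β) : Perm α ≃* Perm β :=
  { e.permCongr with
    map_mul' := by
      intro f g
      ext x
      simp [Equiv.permCongr_apply, Equiv.Perm.mul_apply] }

lemma permCongrMul_coe (e : α ≃ β) (f : Perm α) : permCongrMul e f = e.permCongr f := rfl

lemma permCongr_zpow (e : α ≃ β) (f : Perm α) (z : ℤ) :
    (e.permCongr f) ^ z = e.permCongr (f ^ z) := by
  rw [← permCongrMul_coe, ← permCongrMul_coe, ← map_zpow]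

lemma cyc_permCongr (e : α ≃ β) (f : Perm α) : cyc (e.permCongr f) = cyc f := by
  rw [cyc_def, cyc_def]
  apply Nat.card_congr
  apply (Quotient.congr e ?_).symm
  intro a b
  constructor
  · rintro ⟨z, hz⟩
    exact ⟨z, by rw [permCongr_zpow]; simp [Equiv.permCongr_apply, hz]⟩
  · rintro ⟨z, hz⟩
    rw [permCongr_zpow] at hz
    simp only [Equiv.permCongr_apply, Equiv.symm_apply_apply] at hz
    exact ⟨z, e.injective hz⟩

-- plumbing for tCoset/tCirc
lemma tPerm_le {N : ℕ} (π : Perm (ZMod N)) : tPerm π ≤ N := Nat.sub_le _ _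

lemma tCoset_le {N : ℕ} (π : Perm (ZMod N)) (k : ZMod N) :
    tCoset π ≤ tPerm (π * Equiv.addRight k) := Nat.sInf_le ⟨k, rfl⟩

lemma tCoset_le_card {N : ℕ} (π : Perm (ZMod N)) : tCoset π ≤ N :=
  le_trans (tCoset_le π 0) (tPerm_le _)

lemma exists_tCirc (N : ℕ) : ∃ π : Perm (ZMod N), tCirc N = tCoset π := by
  have h := Nat.sSup_mem (s := { v : ℕ | ∃ π : Perm (ZMod N), v = tCoset π })
    ⟨tCoset 1, 1, rfl⟩ ⟨N, by rintro x ⟨π, rfl⟩; exact tCoset_le_card π⟩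
  exact h

lemma le_tCirc {N : ℕ} (π : Perm (ZMod N)) : tCoset π ≤ tCirc N :=
  le_csSup ⟨N, by rintro x ⟨π', rfl⟩; exact tCoset_le_card π'⟩ ⟨π, rfl⟩

lemma le_tCoset {N : ℕ} (π : Perm (ZMod N)) (B : ℕ)
    (h : ∀ k : ZMod N, B ≤ tPerm (π * Equiv.addRight k)) : B ≤ tCoset π :=
  le_csInf ⟨_, 0, rfl⟩ (by rintro v ⟨k, rfl⟩; exact h k)

end TC


open Equiv Equiv.Perm in
theorem tCirc_mul_ge (n m : ℕ) (hn : 2 ≤ n) (hm : 2 ≤ m) :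
    n * tCirc m + tCirc n ≤ tCirc (n * m) := by
  classical
  haveI : NeZero n := ⟨by omega⟩
  haveI : NeZero m := ⟨by omega⟩
  haveI : NeZero (n * m) := ⟨by positivity⟩
  obtain ⟨σ, hσ⟩ := TC.exists_tCirc n
  obtain ⟨τ, hτ⟩ := TC.exists_tCirc m
  set E : ZMod (n * m) ≃ ZMod m × ZMod n := TC.digitEquiv n m with hE
  set P : Perm (ZMod m × ZMod n) :=
    Equiv.prodShear τ (fun j => if j = 0 then σ else Equiv.refl (ZMod n)) with hP
  set PP : Perm (ZMod (n * m)) := E.symm.permCongr P with hPP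
  refine le_trans ?_ (TC.le_tCirc PP)
  apply TC.le_tCoset
  intro k
  -- conjugate to the skew product G
  set A : Perm (ZMod m × ZMod n) := E.permCongr (Equiv.addRight k) with hA
  set G : Perm (ZMod m × ZMod n) := P * A with hG
  have hconj : PP * Equiv.addRight k = E.symm.permCongr G := by
    ext x
    simp only [hPP, hG, hA, Equiv.Perm.mul_apply, Equiv.permCongr_apply, Equiv.symm_symm,
      Equiv.coe_addRight, Equiv.symm_apply_apply]
  have hcycG : cyc (PP * Equiv.addRight k) = cyc G := by rw [hconj, TC.cyc_permCongr]
  -- skew structure data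
  set κ : ZMod m := ((k.val : ℕ) : ZMod m) with hκ
  set β : Perm (ZMod m) := τ * Equiv.addRight κ with hβ
  set C : ZMod m → ZMod n := fun j => (((j.val + k.val) / m : ℕ) : ZMod n) with hC
  set j₀ : ZMod m := τ 0 with hj₀
  have hβapp : ∀ j : ZMod m, β j = τ (j + κ) := by
    intro j; rw [hβ]; rfl
  have hstep : ∀ (j : ZMod m) (i : ZMod n),
      G (j, i) = (β j, if β j = j₀ then σ (i + C j) else i + C j) := by
    intro j i
    have h1 : G (j, i) = P (E ((E.symm (j, i)) + k)) := by
      simp only [hG, hA, Equiv.Perm.mul_apply, Equiv.permCongr_apply, Equiv.coe_addRight]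
    rw [h1, hE, TC.digit_shift]
    have h2 : P ((j + κ, i + C j) : ZMod m × ZMod n)
        = (τ (j + κ), if j + κ = 0 then σ (i + C j) else i + C j) := by
      show (τ (j + κ), (if j + κ = 0 then σ else Equiv.refl (ZMod n)) (i + C j)) = _
      rw [apply_ite (fun (e : Perm (ZMod n)) => e (i + C j))]
      simp
    change P (j + κ, i + C j) = (β j, if β j = j₀ then σ (i + C j) else i + C j)
    rw [h2]
    have h4 : (β j = j₀) = (j + κ = 0) := by
      rw [hβapp, hj₀]
      exact propext (Equiv.apply_eq_iff_eq τ)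
    simp only [h4, hβapp, hj₀, Equiv.apply_eq_iff_eq]
  have hb : ∀ x : ZMod m × ZMod n, (G x).1 = β x.1 := by
    rintro ⟨j, i⟩
    rw [hstep]
  -- the period of j₀ under β
  set ℓ : ℕ := Function.minimalPeriod (⇑β) j₀ with hℓ
  have hper0 : Function.IsPeriodicPt (⇑β) (orderOf β) j₀ := by
    show (⇑β)^[orderOf β] j₀ = j₀
    rw [← Equiv.Perm.coe_pow, pow_orderOf_eq_one]
    rfl
  have hℓpos : 0 < ℓ := hper0.minimalPeriod_pos (orderOf_pos β)
  have hper : (β ^ ℓ) j₀ = j₀ := by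
    rw [Equiv.Perm.coe_pow]
    exact Function.iterate_minimalPeriod
  have hmin : ∀ t, 0 < t → t < ℓ → (β ^ t) j₀ ≠ j₀ := by
    intro t ht htℓ hcon
    have : Function.IsPeriodicPt (⇑β) t j₀ := by
      show (⇑β)^[t] j₀ = j₀
      rw [← Equiv.Perm.coe_pow]
      exact hcon
    exact absurd (this.minimalPeriod_le ht) (by omega)
  set S : ℕ → ZMod n := fun t => ∑ u ∈ Finset.range t, C ((β ^ u) j₀) with hS
  have hiter : ∀ t, t < ℓ → ∀ i : ZMod n, (G ^ t) (j₀, i) = ((β ^ t) j₀, i + S t) := by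
    intro t
    induction t with
    | zero =>
      intro _ i
      simp [hS]
    | succ t ih =>
      intro ht i
      have hlt : t < ℓ := by omega
      rw [pow_succ', Equiv.Perm.mul_apply, ih hlt i, hstep]
      have c1 : β ((β ^ t) j₀) = (β ^ (t + 1)) j₀ := by
        rw [pow_succ']; rfl
      have hne : β ((β ^ t) j₀) ≠ j₀ := by
        rw [c1]
        exact hmin (t + 1) (by omega) ht
      rw [if_neg hne]
      have c2 : i + S t + C ((β ^ t) j₀) = i + S (t + 1) := by
        rw [hS]
        simp only [Finset.sum_range_succ]
        rw [add_assoc]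
      rw [c1, c2]
  have hret : ∀ i : ZMod n, (G ^ ℓ) (j₀, i) = (j₀, (σ * Equiv.addRight (S ℓ)) i) := by
    intro i
    obtain ⟨t, hsucc⟩ : ∃ t, ℓ = t + 1 := ⟨ℓ - 1, by omega⟩
    rw [hsucc, pow_succ', Equiv.Perm.mul_apply, hiter t (by omega) i, hstep]
    have heq : β ((β ^ t) j₀) = j₀ := by
      have c1 : β ((β ^ t) j₀) = (β ^ (t + 1)) j₀ := by
        rw [pow_succ']; rfl
      rw [c1, ← hsucc]
      exact hper
    rw [if_pos heq, heq]
    have c2 : σ (i + S t + C ((β ^ t) j₀)) = (σ * Equiv.addRight (S ℓ)) i := by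
      rw [Equiv.Perm.mul_apply]
      show σ (i + S t + C ((β ^ t) j₀)) = σ (i + S ℓ)
      rw [hsucc, hS]
      simp only [Finset.sum_range_succ]
      rw [add_assoc]
    rw [c2, ← hsucc]
  set ψ : Perm (ZMod n) := σ * Equiv.addRight (S ℓ) with hψ
  have hkey : cyc G ≤ cyc ψ + (cyc β - 1) * n := by
    have h := TC.cyc_skew_le G β hb j₀ ℓ ψ hret
    rwa [Nat.card_zmod] at h
  have hβle : cyc β ≤ m := by
    have h := TC.cyc_le_card β; rwa [Nat.card_zmod] at h
  have hψle : cyc ψ ≤ n := by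
    have h := TC.cyc_le_card ψ; rwa [Nat.card_zmod] at h
  have hβ1 : 1 ≤ cyc β := TC.one_le_cyc β
  have hbm : tCirc m + cyc β ≤ m := by
    have h1 := TC.tCoset_le τ κ
    have h2 : tPerm (τ * Equiv.addRight κ) = m - cyc β := by rw [hβ]; rfl
    have h3 : tCirc m ≤ m - cyc β := by rw [hτ, ← h2]; exact h1
    omega
  have han : tCirc n + cyc ψ ≤ n := by
    have h1 := TC.tCoset_le σ (S ℓ)
    have h2 : tPerm (σ * Equiv.addRight (S ℓ)) = n - cyc ψ := by rw [hψ]; rfl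
    have h3 : tCirc n ≤ n - cyc ψ := by rw [hσ, ← h2]; exact h1
    omega
  show n * tCirc m + tCirc n ≤ tPerm (PP * Equiv.addRight k)
  have htp : tPerm (PP * Equiv.addRight k) = n * m - cyc G := by
    show n * m - cyc (PP * Equiv.addRight k) = n * m - cyc G
    rw [hcycG]
  rw [htp]
  have hmul : n * (tCirc m + cyc β) ≤ n * m := Nat.mul_le_mul_left n hbm
  obtain ⟨u, hu⟩ : ∃ u, cyc β = u + 1 := ⟨cyc β - 1, by omega⟩
  have h6 : n * tCirc m + n * u + n ≤ n * m := by
    calc n * tCirc m + n * u + n = n * (tCirc m + cyc β) := by rw [hu]; ring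
      _ ≤ n * m := hmul
  have h7 : cyc G ≤ cyc ψ + u * n := by
    have he : (cyc β - 1) = u := by omega
    rw [he] at hkey; exact hkey
  have hfin : n * tCirc m + tCirc n + cyc G ≤ n * m := by nlinarith [h6, h7, han]
  exact Nat.le_sub_of_add_le hfin
end

section
/- Let n ≥ 4 be a composite integer (i.e., n is not prime) and let π ∈ S(ℤ_n) be a permutation that admits a permutation polynomial, i.e., there exists a polynomial f ∈ ℤ_n[x] with π(a) = f(a) for all a ∈ ℤ_n. Then t([π]) ≤ n − 3. -/
lemma three_le_cyc {α : Type*} [Finite α] (σ : Equiv.Perm α) (x y z : α)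
    (hxy : ¬ σ.SameCycle x y) (hxz : ¬ σ.SameCycle x z) (hyz : ¬ σ.SameCycle y z) :
    3 ≤ cyc σ := by
  let s : Setoid α := Setoid.mk σ.SameCycle
    ⟨fun x => Equiv.Perm.SameCycle.refl σ x, fun h => h.symm, fun h h' => h.trans h'⟩
  have hinj : Function.Injective (fun i : Fin 3 =>
      (Quotient.mk s (![x, y, z] i) : Quotient s)) := by
    intro i j hij
    simp only [Quotient.eq] at hij
    fin_cases i <;> fin_cases j <;> simp_all <;>
      first
      | rfl
      | exact absurd hij hxy | exact absurd hij hxz | exact absurd hij hyz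
      | exact absurd hij.symm hxy | exact absurd hij.symm hxz | exact absurd hij.symm hyz
  calc (3 : ℕ) = Nat.card (Fin 3) := by simp
    _ ≤ _ := Nat.card_le_card_of_injective _ hinj

theorem tCoset_le_of_permPoly (n : ℕ) (hn : 4 ≤ n) (hcomp : ¬ n.Prime)
    (π : Equiv.Perm (ZMod n)) (hpoly : ∃ f : Polynomial (ZMod n), ∀ a : ZMod n, π a = f.eval a) :
    tCoset π ≤ n - 3 := by
  have hnz : NeZero n := ⟨by omega⟩
  obtain ⟨f, hf⟩ := hpoly
  obtain ⟨d, hdvd, hd2, hdlt⟩ := Nat.exists_dvd_of_not_prime2 (by omega) hcomp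
  set k : ZMod n := π.symm 0 with hk
  set σ : Equiv.Perm (ZMod n) := π * Equiv.addRight k with hσdef
  have hσ : ∀ z : ZMod n, σ z = f.eval (z + k) := by
    intro z
    rw [hσdef, Equiv.Perm.mul_apply, Equiv.coe_addRight, hf]
  have hσ0 : σ 0 = 0 := by
    have h1 : σ 0 = π (0 + k) := rfl
    rw [h1, zero_add, hk, Equiv.apply_symm_apply]
  -- reduction mod d
  set g : ZMod n →+* ZMod d := ZMod.castHom hdvd (ZMod d) with hg
  have key : ∀ z : ZMod n, g (σ z) = (f.map g).eval (g z + g k) := by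
    intro z
    rw [hσ, Polynomial.eval_map, ← map_add, Polynomial.eval₂_at_apply]
  have hcong : ∀ z : ZMod n, g z = 0 → g (σ z) = 0 := by
    intro z hz
    have h0 : g ((0 : ZMod n)) = 0 := map_zero g
    have := key z
    rw [hz, ← h0, ← key 0, hσ0, h0] at this
    exact this
  -- invariant along the orbit of (d : ZMod n)
  have inv : ∀ j : ℕ, g ((σ ^ j) ((d : ℕ) : ZMod n)) = 0 := by
    intro j
    induction j with
    | zero => simp [hg]
    | succ j ih =>
      rw [pow_succ', Equiv.Perm.mul_apply]
      exact hcong _ ih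
  -- distinctness facts
  haveI : Fact (1 < d) := ⟨hd2⟩
  haveI : Fact (1 < n) := ⟨by omega⟩
  have hval_d : ((d : ℕ) : ZMod n).val = d := ZMod.val_natCast_of_lt hdlt
  have hval_1 : (1 : ZMod n).val = 1 := ZMod.val_one n
  have hd0 : ((d : ℕ) : ZMod n) ≠ 0 := by
    intro h; rw [h, ZMod.val_zero] at hval_d; omega
  have h10 : (1 : ZMod n) ≠ 0 := by
    intro h; rw [h, ZMod.val_zero] at hval_1; omega
  have hd1 : ((d : ℕ) : ZMod n) ≠ 1 := by
    intro h; rw [h, hval_1] at hval_d; omega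
  -- three classes
  have hfix : ∀ w : ZMod n, σ.SameCycle 0 w → w = 0 := by
    intro w ⟨j, hj⟩
    rw [← hj]
    exact (Function.IsFixedPt.perm_zpow hσ0 j)
  have hxy : ¬ σ.SameCycle 0 ((d : ℕ) : ZMod n) := fun h => hd0 (hfix _ h)
  have hxz : ¬ σ.SameCycle 0 1 := fun h => h10 (hfix _ h)
  have hyz : ¬ σ.SameCycle ((d : ℕ) : ZMod n) 1 := by
    intro h
    obtain ⟨j, -, -, hj⟩ := h.exists_pow_eq
    have := inv j
    rw [hj, map_one] at this
    exact one_ne_zero this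
  have h3 : 3 ≤ cyc σ := three_le_cyc σ _ _ _ hxy hxz hyz
  have : tPerm σ ≤ n - 3 := Nat.sub_le_sub_left h3 n
  calc tCoset π ≤ tPerm σ := Nat.sInf_le ⟨k, rfl⟩
    _ ≤ n - 3 := this
end

section
/- Let n ≥ 3 be an integer and let π ∈ S(ℤ_n). Then t([π]) = n − 2 if and only if for every k ∈ ℤ_n the cyclic shift π ∘ c^k has cycle type (1, n−1), i.e., exactly one fixed point and one cycle of length n − 1. -/
def cycSetoid {α : Type*} (σ : Equiv.Perm α) : Setoid α :=
  Setoid.mk σ.SameCycle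
    ⟨fun x => Equiv.Perm.SameCycle.refl σ x, fun h => h.symm, fun h h' => h.trans h'⟩

lemma cyc_eq {α : Type*} (σ : Equiv.Perm α) : cyc σ = Nat.card (Quotient (cycSetoid σ)) := rfl

lemma cyc_le_card {α : Type*} [Fintype α] (σ : Equiv.Perm α) : cyc σ ≤ Fintype.card α := by
  rw [cyc_eq, ← Nat.card_eq_fintype_card]
  exact Nat.card_le_card_of_surjective (Quotient.mk (cycSetoid σ)) Quotient.mk_surjective

lemma two_le_cyc {α : Type*} [Finite α] (σ : Equiv.Perm α) (a b : α)
    (hab : ¬ σ.SameCycle a b) : 2 ≤ cyc σ := by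
  rw [cyc_eq]
  haveI : Fintype (Quotient (cycSetoid σ)) := Fintype.ofFinite _
  rw [Nat.card_eq_fintype_card]
  exact Fintype.one_lt_card_iff.mpr
    ⟨Quotient.mk _ a, Quotient.mk _ b, fun h => hab (Quotient.exact h)⟩

lemma three_le_cyc_s6 {α : Type*} [Finite α] (σ : Equiv.Perm α) (a b c : α)
    (hab : ¬ σ.SameCycle a b) (hac : ¬ σ.SameCycle a c) (hbc : ¬ σ.SameCycle b c) :
    3 ≤ cyc σ := by
  rw [cyc_eq]
  haveI : Fintype (Quotient (cycSetoid σ)) := Fintype.ofFinite _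
  rw [Nat.card_eq_fintype_card]
  exact Fintype.two_lt_card_iff.mpr
    ⟨Quotient.mk _ a, Quotient.mk _ b, Quotient.mk _ c,
      fun h => hab (Quotient.exact h), fun h => hac (Quotient.exact h),
      fun h => hbc (Quotient.exact h)⟩

lemma not_sameCycle_of_fixed {α : Type*} (σ : Equiv.Perm α) {a c : α}
    (ha : σ a = a) (hne : a ≠ c) : ¬ σ.SameCycle a c := by
  rintro ⟨i, hi⟩
  rw [Equiv.Perm.zpow_apply_eq_self_of_apply_eq_self ha i] at hi
  exact hne hi

open Finset in
lemma sum_fix (n : ℕ) [NeZero n] (π : Equiv.Perm (ZMod n)) :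
    ∑ k : ZMod n, (univ.filter (fun x : ZMod n => π (x + k) = x)).card = n := by
  have key : ∀ x k : ZMod n, (π (x + k) = x) ↔ (k = π⁻¹ x - x) := by
    intro x k
    constructor
    · intro h
      have h2 : x + k = π⁻¹ x := by
        conv_lhs => rw [← (Equiv.Perm.inv_eq_iff_eq.mpr rfl : π⁻¹ (π (x+k)) = x+k), h]
      rw [← h2]; ring
    · intro h
      subst h
      have : x + (π⁻¹ x - x) = π⁻¹ x := by ring
      rw [this, Equiv.Perm.coe_inv, Equiv.apply_symm_apply]
  calc ∑ k : ZMod n, (univ.filter (fun x : ZMod n => π (x + k) = x)).card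
      = ∑ k : ZMod n, ∑ x : ZMod n, if π (x + k) = x then 1 else 0 := by
        refine Finset.sum_congr rfl fun k _ => ?_
        rw [Finset.card_filter]
    _ = ∑ x : ZMod n, ∑ k : ZMod n, if π (x + k) = x then 1 else 0 := Finset.sum_comm
    _ = ∑ x : ZMod n, ∑ k : ZMod n, if k = π⁻¹ x - x then 1 else 0 := by
        refine Finset.sum_congr rfl fun x _ => Finset.sum_congr rfl fun k _ => ?_
        by_cases h : k = π⁻¹ x - x
        · simp [h, (key x k).mpr h]
        · rw [if_neg h, if_neg (fun hc => h ((key x k).mp hc))]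
    _ = ∑ _x : ZMod n, 1 := by
        refine Finset.sum_congr rfl fun x _ => ?_
        simp
    _ = n := by simp [ZMod.card]

open Finset in
lemma existsUnique_iff_card_one {α : Type*} [Fintype α] [DecidableEq α]
    (P : α → Prop) [DecidablePred P] :
    (∃! x, P x) ↔ (univ.filter P).card = 1 := by
  rw [Finset.card_eq_one]
  constructor
  · rintro ⟨x, hx, hu⟩
    refine ⟨x, ?_⟩
    ext y
    simp only [mem_filter, mem_univ, true_and, mem_singleton]
    exact ⟨fun h => hu y h, fun h => h ▸ hx⟩
  · rintro ⟨x, hx⟩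
    have hx' : P x := by
      have : x ∈ univ.filter P := hx ▸ Finset.mem_singleton_self x
      exact (mem_filter.mp this).2
    exact ⟨x, hx', fun y hy => by
      have : y ∈ univ.filter P := mem_filter.mpr ⟨mem_univ y, hy⟩
      rw [hx] at this; exact mem_singleton.mp this⟩

open Finset in
lemma fix_le_one_of_cyc_le_two (n : ℕ) [NeZero n] (hn : 3 ≤ n) (σ : Equiv.Perm (ZMod n))
    (h2 : cyc σ ≤ 2) : (univ.filter (fun x : ZMod n => σ x = x)).card ≤ 1 := by
  by_contra hc
  push_neg at hc
  obtain ⟨a, ha, b, hb, hab⟩ := Finset.one_lt_card.mp hc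
  have ha' : σ a = a := (mem_filter.mp ha).2
  have hb' : σ b = b := (mem_filter.mp hb).2
  by_cases h1 : σ = 1
  · subst h1
    have hcard : 2 < Fintype.card (ZMod n) := by rw [ZMod.card]; omega
    obtain ⟨x, y, z, hxy, hxz, hyz⟩ := Fintype.two_lt_card_iff.mp hcard
    have := three_le_cyc_s6 1 x y z
      (by rw [Equiv.Perm.sameCycle_one]; exact hxy)
      (by rw [Equiv.Perm.sameCycle_one]; exact hxz)
      (by rw [Equiv.Perm.sameCycle_one]; exact hyz)
    omega
  · obtain ⟨c, hc'⟩ : ∃ c, σ c ≠ c := by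
      by_contra hall
      push_neg at hall
      exact h1 (Equiv.ext hall)
    have hac : a ≠ c := fun h => hc' (h ▸ ha')
    have hbc : b ≠ c := fun h => hc' (h ▸ hb')
    have := three_le_cyc_s6 σ a b c
      (not_sameCycle_of_fixed σ ha' hab)
      (not_sameCycle_of_fixed σ ha' hac)
      (not_sameCycle_of_fixed σ hb' hbc)
    omega

open Finset in
lemma two_le_cyc_of_fix_one (n : ℕ) [NeZero n] (hn : 3 ≤ n) (σ : Equiv.Perm (ZMod n))
    (h1 : (univ.filter (fun x : ZMod n => σ x = x)).card = 1) : 2 ≤ cyc σ := by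
  obtain ⟨a, ha⟩ := Finset.card_eq_one.mp h1
  have ha' : σ a = a := by
    have : a ∈ univ.filter (fun x : ZMod n => σ x = x) := ha ▸ Finset.mem_singleton_self a
    exact (mem_filter.mp this).2
  haveI : Nontrivial (ZMod n) := Fintype.one_lt_card_iff_nontrivial.mp (by rw [ZMod.card]; omega)
  obtain ⟨c, hc⟩ := exists_ne a
  have hc' : σ c ≠ c := fun h => by
    have : c ∈ univ.filter (fun x : ZMod n => σ x = x) := mem_filter.mpr ⟨mem_univ c, h⟩
    rw [ha] at this
    exact hc (mem_singleton.mp this)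
  exact two_le_cyc σ a c (not_sameCycle_of_fixed σ ha' (fun h => hc' (h ▸ ha')))

open Finset in
theorem tCoset_eq_sub_two_iff (n : ℕ) (hn : 3 ≤ n) (π : Equiv.Perm (ZMod n)) :
    tCoset π = n - 2 ↔
      ∀ k : ZMod n,
        (∃! x : ZMod n, π (x + k) = x) ∧ cyc (π * Equiv.addRight k) = 2 := by
  haveI : NeZero n := ⟨by omega⟩
  have happ : ∀ (k : ZMod n) (x : ZMod n), (π * Equiv.addRight k) x = π (x + k) :=
    fun k x => rfl
  have hfeq : ∀ k : ZMod n,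
      univ.filter (fun x : ZMod n => (π * Equiv.addRight k) x = x)
        = univ.filter (fun x : ZMod n => π (x + k) = x) := by
    intro k
    apply Finset.filter_congr
    intro x _
    rw [happ]
  have hcyc_le : ∀ k : ZMod n, cyc (π * Equiv.addRight k) ≤ n := by
    intro k
    have := cyc_le_card (π * Equiv.addRight k)
    rwa [ZMod.card] at this
  constructor
  · intro h k
    have hcyc2 : ∀ j : ZMod n, cyc (π * Equiv.addRight j) ≤ 2 := by
      intro j
      have hmem : tPerm (π * Equiv.addRight j) ∈
          { m : ℕ | ∃ k : ZMod n, m = tPerm (π * Equiv.addRight k) } := ⟨j, rfl⟩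
      have hle : n - 2 ≤ tPerm (π * Equiv.addRight j) := h ▸ Nat.sInf_le hmem
      have : tPerm (π * Equiv.addRight j) = n - cyc (π * Equiv.addRight j) := rfl
      rw [this] at hle
      have := hcyc_le j
      omega
    have hfle : ∀ j : ZMod n, (univ.filter (fun x : ZMod n => π (x + j) = x)).card ≤ 1 := by
      intro j
      rw [← hfeq]
      exact fix_le_one_of_cyc_le_two n hn _ (hcyc2 j)
    have hsum := sum_fix n π
    have hall1 : ∀ j : ZMod n, (univ.filter (fun x : ZMod n => π (x + j) = x)).card = 1 := by
      by_contra hc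
      push_neg at hc
      obtain ⟨j, hj⟩ := hc
      have hlt : ∑ k : ZMod n, (univ.filter (fun x : ZMod n => π (x + k) = x)).card
          < ∑ _k : ZMod n, 1 :=
        Finset.sum_lt_sum (fun i _ => hfle i)
          ⟨j, Finset.mem_univ j, by have := hfle j; omega⟩
      rw [hsum] at hlt
      simp only [Finset.sum_const, smul_eq_mul, mul_one, Finset.card_univ, ZMod.card] at hlt
      omega
    refine ⟨(existsUnique_iff_card_one _).mpr (hall1 k), ?_⟩
    refine le_antisymm (hcyc2 k) ?_
    apply two_le_cyc_of_fix_one n hn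
    rw [hfeq]
    exact hall1 k
  · intro h
    have hset : { m : ℕ | ∃ k : ZMod n, m = tPerm (π * Equiv.addRight k) } = {n - 2} := by
      ext m
      simp only [Set.mem_setOf_eq, Set.mem_singleton_iff]
      constructor
      · rintro ⟨k, rfl⟩
        show n - cyc (π * Equiv.addRight k) = n - 2
        rw [(h k).2]
      · rintro rfl
        refine ⟨0, ?_⟩
        show n - 2 = n - cyc (π * Equiv.addRight 0)
        rw [(h 0).2]
    rw [tCoset, hset, csInf_singleton]
end

section
/- Let n ≥ 1 and let π ∈ S(ℤ_n). Then π is a complete mapping if and only if for every k ∈ ℤ_n the cyclic shift π ∘ c^k has no cycle of length exactly 2 in its cycle decomposition (equivalently, there are no distinct a, b ∈ ℤ_n with (π ∘ c^k)(a) = b and (π ∘ c^k)(b) = a). -/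
theorem completeMapping_iff_shifts_no_two_cycle (n : ℕ) (hn : 1 ≤ n)
    (π : Equiv.Perm (ZMod n)) :
    Function.Bijective (fun x : ZMod n => π x + x) ↔
      ∀ k a b : ZMod n, a ≠ b → π (a + k) = b → π (b + k) ≠ a := by
  haveI : NeZero n := ⟨by omega⟩
  constructor
  · intro hbij k a b hab h1 h2
    have := hbij.1 (a₁ := a + k) (a₂ := b + k) (by simp only []; rw [h1, h2]; ring)
    exact hab (by simpa using this)
  · intro h
    rw [← Finite.injective_iff_bijective]
    intro x y hxy
    by_contra hne
    simp only at hxy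
    have hπ : π x ≠ π y := fun he => hne (by simpa [he] using hxy)
    exact h (x - π y) (π x) (π y) hπ
      (by rw [show π x + (x - π y) = y by linear_combination hxy])
      (by rw [show π y + (x - π y) = x by ring])
end

section
/- Let n be a positive integer. There exists a strong complete mapping π ∈ S(ℤ_n) (i.e., a permutation π of ℤ_n such that both x ↦ π(x) − x and x ↦ π(x) + x are permutations of ℤ_n) if and only if gcd(n, 6) = 1. -/
lemma six_mul_sum_sq (n : ℕ) :
    6 * ∑ i ∈ Finset.range (n + 1), i ^ 2 = n * (n + 1) * (2 * n + 1) := by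
  induction n with
  | zero => simp
  | succ m ih =>
    rw [Finset.sum_range_succ, Nat.mul_add, ih]
    ring

lemma sum_zmod_eq {n : ℕ} [NeZero n] {M : Type*} [AddCommMonoid M] (f : ZMod n → M) :
    ∑ x : ZMod n, f x = ∑ i ∈ Finset.range n, f (i : ZMod n) := by
  refine (Finset.sum_nbij' (fun x => (ZMod.val x : ℕ)) (fun i => (i : ZMod n))
    (fun x _ => Finset.mem_range.mpr (ZMod.val_lt x)) (fun i _ => Finset.mem_univ _)
    (fun x _ => ZMod.natCast_rightInverse x) (fun i hi => ZMod.val_cast_of_lt (Finset.mem_range.mp hi))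
    ?_)
  intro x _
  rw [ZMod.natCast_rightInverse x]

theorem exists_strongCompleteMapping_iff (n : ℕ) (hn : 0 < n) :
    (∃ π : Equiv.Perm (ZMod n),
        Function.Bijective (fun x : ZMod n => π x - x) ∧
        Function.Bijective (fun x : ZMod n => π x + x)) ↔ Nat.gcd n 6 = 1 := by
  haveI : NeZero n := ⟨hn.ne'⟩
  constructor
  · rintro ⟨π, hsub, hadd⟩
    -- linear sum : ∑ x = 0
    have hπ : (∑ x : ZMod n, π x) = ∑ x : ZMod n, x :=
      Function.Bijective.sum_comp π.bijective id
    have hadds : (∑ x : ZMod n, (π x + x)) = ∑ x : ZMod n, x :=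
      Function.Bijective.sum_comp hadd id
    have hS0 : (∑ x : ZMod n, x) = 0 := by
      have key : (∑ x : ZMod n, x) + ∑ x : ZMod n, x = ∑ x : ZMod n, x := by
        have : (∑ x : ZMod n, x) + ∑ x : ZMod n, x = ∑ x : ZMod n, (π x + x) := by
          rw [Finset.sum_add_distrib, hπ]
        exact this.trans hadds
      exact add_eq_right.mp key
    -- square sum : 2 * ∑ x ^ 2 = 0
    have hsq : (2 : ZMod n) * ∑ x : ZMod n, x ^ 2 = 0 := by
      have e1 : (∑ x : ZMod n, (π x - x) ^ 2) = ∑ x : ZMod n, x ^ 2 :=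
        Function.Bijective.sum_comp hsub (fun y => y ^ 2)
      have e2 : (∑ x : ZMod n, (π x + x) ^ 2) = ∑ x : ZMod n, x ^ 2 :=
        Function.Bijective.sum_comp hadd (fun y => y ^ 2)
      have e3 : (∑ x : ZMod n, (π x) ^ 2) = ∑ x : ZMod n, x ^ 2 :=
        Function.Bijective.sum_comp π.bijective (fun y => y ^ 2)
      have expand : (∑ x : ZMod n, (π x - x) ^ 2) + ∑ x : ZMod n, (π x + x) ^ 2
          = 2 * (∑ x : ZMod n, (π x) ^ 2) + 2 * ∑ x : ZMod n, x ^ 2 := by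
        rw [← Finset.sum_add_distrib, Finset.mul_sum, Finset.mul_sum, ← Finset.sum_add_distrib]
        exact Finset.sum_congr rfl fun x _ => by ring
      rw [e1, e2, e3] at expand
      linear_combination -expand
    -- convert to divisibility over ℕ
    set T : ℕ := ∑ i ∈ Finset.range n, i with hT
    set U : ℕ := ∑ i ∈ Finset.range n, i ^ 2 with hU
    have hdT : n ∣ T := by
      rw [← ZMod.natCast_eq_zero_iff]
      push_cast [hT]
      rw [← sum_zmod_eq (fun x : ZMod n => x)] at *
      exact hS0
    have hdU : n ∣ 2 * U := by
      rw [← ZMod.natCast_eq_zero_iff]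
      push_cast [hU]
      rw [← sum_zmod_eq (fun x : ZMod n => x ^ 2)]
      exact hsq
    -- n is odd
    have hodd : ¬ 2 ∣ n := by
      intro h2n
      obtain ⟨a, ha⟩ := hdT
      have : n * (n - 1) = n * (2 * a) := by
        rw [← Finset.sum_range_id_mul_two n, ← hT, ha]; ring
      have := Nat.eq_of_mul_eq_mul_left hn this
      omega
    -- n is not divisible by 3
    have h3d : ¬ 3 ∣ n := by
      intro h3n
      obtain ⟨a, ha⟩ := hdU
      obtain ⟨m, rfl⟩ : ∃ m, n = m + 1 := ⟨n - 1, by omega⟩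
      have key : 6 * U = m * (m + 1) * (2 * m + 1) := six_mul_sum_sq m
      have : (m + 1) * (3 * a) = (m + 1) * (m * (2 * m + 1)) := by
        have : 3 * (2 * U) = 6 * U := by ring
        rw [ha, key] at this
        linarith [this]
      have hc : 3 * a = m * (2 * m + 1) := Nat.eq_of_mul_eq_mul_left hn this
      -- but 3 ∣ m + 1, so m = 3s + 2
      obtain ⟨t, ht⟩ := h3n
      have hm : m = 3 * (t - 1) + 2 := by omega
      set s := t - 1
      have : m * (2 * m + 1) = 3 * (6 * s ^ 2 + 9 * s + 3) + 1 := by rw [hm]; ring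
      omega
    have c2 : Nat.Coprime n 2 := (Nat.coprime_comm.mp ((Nat.prime_two.coprime_iff_not_dvd).mpr hodd))
    have c3 : Nat.Coprime n 3 := (Nat.coprime_comm.mp ((Nat.prime_three.coprime_iff_not_dvd).mpr h3d))
    have : Nat.Coprime n 6 := by
      have : (6 : ℕ) = 2 * 3 := by norm_num
      rw [this]
      exact Nat.Coprime.mul_right c2 c3
    exact this
  · intro h
    have h6 : Nat.Coprime n 6 := h
    have h2 : Nat.Coprime 2 n := (h6.coprime_dvd_right (by norm_num)).symm
    have h3 : Nat.Coprime 3 n := (h6.coprime_dvd_right (by norm_num)).symm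
    let u2 : (ZMod n)ˣ := ZMod.unitOfCoprime 2 h2
    let u3 : (ZMod n)ˣ := ZMod.unitOfCoprime 3 h3
    refine ⟨Units.mulLeft u2, ?_, ?_⟩
    · have : (fun x : ZMod n => Units.mulLeft u2 x - x) = id := by
        funext x
        have : (u2 : ZMod n) = 2 := ZMod.coe_unitOfCoprime 2 h2
        simp [Units.mulLeft, this, two_mul]
      rw [this]; exact Function.bijective_id
    · have : (fun x : ZMod n => Units.mulLeft u2 x + x) = fun x => Units.mulLeft u3 x := by
        funext x
        have e2 : (u2 : ZMod n) = 2 := ZMod.coe_unitOfCoprime 2 h2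
        have e3 : (u3 : ZMod n) = 3 := ZMod.coe_unitOfCoprime 3 h3
        simp [Units.mulLeft, e2, e3]; ring
      rw [this]; exact (Units.mulLeft u3).bijective
end

section
/- Let n be a positive integer and let a be an integer coprime to n. Then the number of cycles (counting fixed points) in the cycle decomposition of the permutation x ↦ a·x of ℤ_n equals the sum over positive divisors d of n of φ(d) / ord_d(a), where φ is Euler's totient function and ord_d(a) is the multiplicative order of a modulo d (with ord_1(a) = 1). -/
section Aux

variable {n a : ℕ}

/-- Key characterization: `a^k * x = x` iff `ord_d(a) ∣ k` where `d = addOrderOf x`. -/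
lemma key_iff (hn : 0 < n) (x : ZMod n) (k : ℕ) :
    (a : ZMod n) ^ k * x = x ↔ orderOf ((a : ZMod (addOrderOf x))) ∣ k := by
  haveI : NeZero n := ⟨hn.ne'⟩
  haveI : NeZero (addOrderOf x) := ⟨(addOrderOf_pos x).ne'⟩
  have h1 : (a : ZMod n) ^ k * x = ((a ^ k : ℕ) : ℤ) • x := by
    rw [zsmul_eq_mul]; push_cast; ring
  rw [h1]
  have h2 : (((a ^ k : ℕ) : ℤ) • x = x) ↔ (((a ^ k : ℕ) : ℤ) - 1) • x = 0 := by
    rw [sub_zsmul, one_zsmul, ← sub_eq_add_neg, sub_eq_zero]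
  rw [h2, ← addOrderOf_dvd_iff_zsmul_eq_zero, ← ZMod.intCast_zmod_eq_zero_iff_dvd]
  have h3 : ((((a ^ k : ℕ) : ℤ) - 1 : ℤ) : ZMod (addOrderOf x)) = (a : ZMod (addOrderOf x)) ^ k - 1 := by
    push_cast; ring
  rw [h3, sub_eq_zero]
  exact (orderOf_dvd_iff_pow_eq_one).symm

lemma addOrder_mul_pow (hn : 0 < n) (ha : Nat.Coprime a n) (x : ZMod n) (k : ℕ) :
    addOrderOf ((a : ZMod n) ^ k * x) = addOrderOf x := by
  haveI : NeZero n := ⟨hn.ne'⟩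
  have hu : IsUnit ((a : ZMod n) ^ k) := ((ZMod.isUnit_iff_coprime a n).2 ha).pow k
  rw [addOrderOf_eq_addOrderOf_iff]
  intro c
  rw [nsmul_eq_mul, nsmul_eq_mul, mul_left_comm]
  exact hu.mul_right_eq_zero

lemma pow_apply_eq {π : Equiv.Perm (ZMod n)} (hπ : ∀ x : ZMod n, π x = (a : ZMod n) * x)
    (x : ZMod n) (k : ℕ) : (π ^ k) x = (a : ZMod n) ^ k * x := by
  induction k with
  | zero => simp
  | succ k ih =>
    rw [pow_succ', Equiv.Perm.mul_apply, ih, hπ, pow_succ']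
    ring

end Aux

theorem cyc_mulLeft_eq_sum_divisors (n a : ℕ) (hn : 0 < n) (ha : Nat.Coprime a n)
    (π : Equiv.Perm (ZMod n)) (hπ : ∀ x : ZMod n, π x = (a : ZMod n) * x) :
    cyc π = ∑ d ∈ n.divisors, d.totient / orderOf ((a : ZMod d)) := by
  classical
  haveI : NeZero n := ⟨hn.ne'⟩
  set s : Setoid (ZMod n) := Setoid.mk π.SameCycle
    ⟨fun x => Equiv.Perm.SameCycle.refl π x, fun h => h.symm, fun h h' => h.trans h'⟩ with hs
  show Nat.card (Quotient s) = _
  haveI fQ : Fintype (Quotient s) := Quotient.fintype s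
  rw [Nat.card_eq_fintype_card]
  have Fwd : ∀ x y : ZMod n, π.SameCycle x y → addOrderOf x = addOrderOf y := by
    intro x y hxy
    obtain ⟨i, -, hi⟩ := hxy.exists_pow_eq'
    rw [← hi, pow_apply_eq hπ, addOrder_mul_pow hn ha]
  set F : Quotient s → ℕ := Quotient.lift addOrderOf Fwd with hF
  have step1 : Fintype.card (Quotient s) =
      ∑ d ∈ n.divisors, (Finset.univ.filter fun q : Quotient s => F q = d).card := by
    rw [← Finset.card_univ]
    apply Finset.card_eq_sum_card_fiberwise
    intro q _
    obtain ⟨x, rfl⟩ := Quotient.exists_rep q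
    have : F (Quotient.mk s x) = addOrderOf x := rfl
    rw [this, Finset.mem_coe, Nat.mem_divisors]
    refine ⟨?_, hn.ne'⟩
    have := addOrderOf_dvd_card (x := x)
    rwa [ZMod.card] at this
  rw [step1]
  apply Finset.sum_congr rfl
  intro d hd
  have hdn : d ∣ n := Nat.dvd_of_mem_divisors hd
  have hdpos : 0 < d := Nat.pos_of_mem_divisors hd
  haveI : NeZero d := ⟨hdpos.ne'⟩
  set m := orderOf ((a : ZMod d)) with hm
  have hm0 : 0 < m := by
    obtain ⟨u, hu'⟩ := (ZMod.isUnit_iff_coprime a d).2 (ha.coprime_dvd_right hdn)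
    rw [hm, ← hu', orderOf_units]
    exact orderOf_pos u
  -- each class with order d has cardinality m
  have class_card : ∀ x₀ : ZMod n, addOrderOf x₀ = d →
      (Finset.univ.filter fun y : ZMod n => π.SameCycle y x₀).card = m := by
    intro x₀ hx₀
    have hkey : ∀ k : ℕ, (a : ZMod n) ^ k * x₀ = x₀ ↔ m ∣ k := by
      intro k; rw [hm, ← hx₀]; exact key_iff hn x₀ k
    have red : ∀ q r : ℕ, (a : ZMod n) ^ (m * q + r) * x₀ = (a : ZMod n) ^ r * x₀ := by
      intro q r
      induction q with
      | zero => simp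
      | succ q ih =>
        have he : m * (q + 1) + r = (m * q + r) + m := by ring
        rw [he, pow_add, mul_assoc, (hkey m).2 dvd_rfl, ih]
    have himg : (Finset.univ.filter fun y : ZMod n => π.SameCycle y x₀) =
        (Finset.range m).image (fun k => (a : ZMod n) ^ k * x₀) := by
      ext y
      simp only [Finset.mem_filter, Finset.mem_univ, true_and, Finset.mem_image,
        Finset.mem_range]
      constructor
      · intro hsc
        obtain ⟨i, -, hi⟩ := hsc.symm.exists_pow_eq'
        refine ⟨i % m, Nat.mod_lt _ hm0, ?_⟩
        rw [pow_apply_eq hπ] at hi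
        rw [← hi]
        conv_rhs => rw [← Nat.div_add_mod i m]
        rw [red]
      · rintro ⟨k, -, rfl⟩
        exact Equiv.Perm.SameCycle.symm ⟨(k : ℤ), by
          rw [zpow_natCast, pow_apply_eq hπ]⟩
    rw [himg, Finset.card_image_of_injOn, Finset.card_range]
    intro i hi j hj hij
    simp only [Finset.coe_range, Set.mem_Iio] at hi hj
    have cancel : ∀ i j : ℕ, i ≤ j → j < m →
        (a : ZMod n) ^ i * x₀ = (a : ZMod n) ^ j * x₀ → i = j := by
      intro i j hij hjm h
      have hu : IsUnit ((a : ZMod n) ^ i) := ((ZMod.isUnit_iff_coprime a n).2 ha).pow i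
      have h' : (a : ZMod n) ^ i * x₀ = (a : ZMod n) ^ i * ((a : ZMod n) ^ (j - i) * x₀) := by
        rw [← mul_assoc, ← pow_add, Nat.add_sub_cancel' hij]
        exact h
      have h2 : (a : ZMod n) ^ (j - i) * x₀ = x₀ := (hu.mul_left_cancel h'.symm)
      have h3 : m ∣ j - i := (hkey _).1 h2
      have h4 : j - i = 0 := Nat.eq_zero_of_dvd_of_lt h3 (lt_of_le_of_lt (Nat.sub_le j i) hjm) |>.symm ▸ rfl
      omega
    rcases le_total i j with h | h
    · exact cancel i j h hj hij
    · exact (cancel j i h hi hij.symm).symm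
  -- count: totient d = (#classes with order d) * m
  have key : d.totient = (Finset.univ.filter fun q : Quotient s => F q = d).card * m := by
    have h1 : (Finset.univ.filter fun x : ZMod n => addOrderOf x = d).card = d.totient := by
      have := IsAddCyclic.card_addOrderOf_eq_totient (α := ZMod n) (d := d)
        (by rw [ZMod.card]; exact hdn)
      convert this using 2
    rw [← h1]
    rw [Finset.card_eq_sum_card_fiberwise
      (f := Quotient.mk s) (t := Finset.univ.filter fun q : Quotient s => F q = d)
      (fun x hx => by
        simp only [Finset.mem_coe, Finset.mem_filter, Finset.mem_univ, true_and] at hx ⊢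
        exact hx)]
    rw [Finset.sum_congr rfl (fun q hq => ?_), Finset.sum_const, smul_eq_mul]
    obtain ⟨x₀, rfl⟩ := Quotient.exists_rep q
    simp only [Finset.mem_filter, Finset.mem_univ, true_and] at hq
    have hx₀ : addOrderOf x₀ = d := hq
    rw [← class_card x₀ hx₀]
    congr 1
    ext y
    simp only [Finset.mem_filter, Finset.mem_univ, true_and]
    constructor
    · rintro ⟨-, h⟩
      exact Quotient.eq.mp h
    · intro h
      exact ⟨(Fwd _ _ h.symm).symm.trans hx₀, Quotient.sound h⟩
  rw [key, Nat.mul_div_cancel _ hm0]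
end

section
/- Let n and a be coprime positive integers. For every integer k define the permutation π_k ∈ S(ℤ_n) by π_k(x) = a·x + k. Then cyc(π_k) ≤ cyc(π_0) for every integer k. -/
/-- Burnside-style cycle counting: if `σ ^ m = 1` with `m > 0`, then
`cyc σ * m` equals the total number of fixed points of `σ ^ j` for `j < m`. -/
theorem cyc_mul_eq_sum_fixed {α : Type*} [Fintype α] [DecidableEq α] (σ : Equiv.Perm α)
    (m : ℕ) (hm : 0 < m) (hσ : σ ^ m = 1) :
    cyc σ * m = ∑ j ∈ Finset.range m, (Finset.univ.filter fun x => (σ ^ j) x = x).card := by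
  haveI : NeZero m := ⟨hm.ne'⟩
  have hmod : ∀ t : ℕ, σ ^ t = σ ^ (t % m) := by
    intro t
    conv_lhs => rw [← Nat.mod_add_div t m, pow_add, pow_mul, hσ, one_pow, mul_one]
  letI : AddAction (ZMod m) α :=
    { vadd := fun j x => (σ ^ j.val) x
      zero_vadd := fun x => by
        show (σ ^ (0 : ZMod m).val) x = x
        simp [ZMod.val_zero]
      add_vadd := fun j l x => by
        show (σ ^ (j + l).val) x = (σ ^ j.val) ((σ ^ l.val) x)
        rw [← Equiv.Perm.mul_apply, ← pow_add, ZMod.val_add, ← hmod] }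
  have hvadd : ∀ (j : ZMod m) (x : α), j +ᵥ x = (σ ^ j.val) x := fun _ _ => rfl
  have hsetoid : (Setoid.mk σ.SameCycle
      ⟨fun x => Equiv.Perm.SameCycle.refl σ x, fun h => h.symm, fun h h' => h.trans h'⟩)
      = AddAction.orbitRel (ZMod m) α := by
    apply Setoid.ext
    intro x y
    constructor
    · intro h
      obtain ⟨i, _, hi⟩ := h.symm.exists_pow_eq'
      have : ((i : ZMod m)) +ᵥ y = x := by
        rw [hvadd, ZMod.val_natCast, ← hmod, hi]
      exact AddAction.mem_orbit_iff.mpr ⟨_, this⟩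
    · intro h
      obtain ⟨j, hj⟩ := AddAction.mem_orbit_iff.mp h
      exact (Equiv.Perm.SameCycle.symm ⟨(j.val : ℤ), by rw [zpow_natCast, ← hvadd, hj]⟩)
  unfold cyc
  rw [hsetoid]
  haveI : Fintype (Quotient (AddAction.orbitRel (ZMod m) α)) := Fintype.ofFinite _
  haveI : ∀ j : ZMod m, Fintype (AddAction.fixedBy α j) := fun j => Fintype.ofFinite _
  have hb := AddAction.sum_card_fixedBy_eq_card_orbits_mul_card_addGroup (ZMod m) α
  rw [Nat.card_eq_fintype_card]
  have hb' : m * Fintype.card (Quotient (AddAction.orbitRel (ZMod m) α))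
      = ∑ a : ZMod m, Fintype.card (AddAction.fixedBy α a) := by
    rw [hb, ZMod.card, mul_comm]
  rw [mul_comm, hb']
  have hcard : ∀ j : ZMod m, Fintype.card (AddAction.fixedBy α j)
      = (Finset.univ.filter fun x => (σ ^ j.val) x = x).card := by
    intro j
    rw [← Set.toFinset_card]
    congr 1
    ext x
    rw [Set.mem_toFinset]; simp [AddAction.fixedBy, hvadd]
  rw [Finset.sum_congr rfl fun j _ => hcard j]
  refine Finset.sum_nbij' (fun j => j.val) (fun t => (t : ZMod m)) ?_ ?_ ?_ ?_ ?_
  · intro j _; exact Finset.mem_range.mpr (ZMod.val_lt j)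
  · intro t _; exact Finset.mem_univ _
  · intro j _; simp [ZMod.natCast_val, ZMod.cast_id]
  · intro t ht; exact ZMod.val_natCast_of_lt (Finset.mem_range.mp ht)
  · intro j _; rfl

/-- The number of fixed points of `x ↦ u * x + c` is at most that of `x ↦ u * x`. -/
theorem fix_count_affine_le {n : ℕ} [NeZero n] (u c : ZMod n) :
    (Finset.univ.filter fun x : ZMod n => u * x + c = x).card
      ≤ (Finset.univ.filter fun x : ZMod n => u * x = x).card := by
  rcases (Finset.univ.filter fun x : ZMod n => u * x + c = x).eq_empty_or_nonempty with h | h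
  · simp [h]
  · obtain ⟨x0, hx0⟩ := h
    rw [Finset.mem_filter] at hx0
    apply Finset.card_le_card_of_injOn (fun x => x - x0)
    · intro x hx
      rw [Finset.mem_coe, Finset.mem_filter] at hx ⊢
      refine ⟨Finset.mem_univ _, ?_⟩
      have h1 := hx.2
      have h2 := hx0.2
      ring_nf
      linear_combination h1 - h2
    · intro x _ y _ hxy
      exact sub_left_inj.mp hxy

/-- Powers of the affine maps have the expected form. -/
theorem affine_pow_form (n a : ℕ) (k : ℤ) (πk π0 : Equiv.Perm (ZMod n))
    (hπk : ∀ x : ZMod n, πk x = (a : ZMod n) * x + (k : ZMod n))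
    (hπ0 : ∀ x : ZMod n, π0 x = (a : ZMod n) * x) (j : ℕ) :
    (∃ c : ZMod n, ∀ x, (πk ^ j) x = (a : ZMod n) ^ j * x + c)
      ∧ ∀ x, (π0 ^ j) x = (a : ZMod n) ^ j * x := by
  induction j with
  | zero => exact ⟨⟨0, fun x => by simp⟩, fun x => by simp⟩
  | succ j ih =>
    obtain ⟨⟨c, hc⟩, h0⟩ := ih
    refine ⟨⟨(a : ZMod n) * c + (k : ZMod n), fun x => ?_⟩, fun x => ?_⟩
    · rw [pow_succ', Equiv.Perm.mul_apply, hc, hπk]; ring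
    · rw [pow_succ', Equiv.Perm.mul_apply, h0, hπ0]; ring

theorem cyc_affine_shift_le (n a : ℕ) (hn : 0 < n) (ha : 0 < a) (hco : Nat.Coprime a n)
    (k : ℤ) (πk π0 : Equiv.Perm (ZMod n))
    (hπk : ∀ x : ZMod n, πk x = (a : ZMod n) * x + (k : ZMod n))
    (hπ0 : ∀ x : ZMod n, π0 x = (a : ZMod n) * x) :
    cyc πk ≤ cyc π0 := by
  haveI : NeZero n := ⟨hn.ne'⟩
  set m := Fintype.card (Equiv.Perm (ZMod n)) with hm_def
  have hm : 0 < m := Fintype.card_pos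
  have h1 : cyc πk * m = ∑ j ∈ Finset.range m,
      (Finset.univ.filter fun x => (πk ^ j) x = x).card :=
    cyc_mul_eq_sum_fixed πk m hm (pow_card_eq_one)
  have h2 : cyc π0 * m = ∑ j ∈ Finset.range m,
      (Finset.univ.filter fun x => (π0 ^ j) x = x).card :=
    cyc_mul_eq_sum_fixed π0 m hm (pow_card_eq_one)
  have hle : cyc πk * m ≤ cyc π0 * m := by
    rw [h1, h2]
    apply Finset.sum_le_sum
    intro j _
    obtain ⟨⟨c, hc⟩, h0⟩ := affine_pow_form n a k πk π0 hπk hπ0 j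
    calc (Finset.univ.filter fun x => (πk ^ j) x = x).card
        = (Finset.univ.filter fun x : ZMod n => (a : ZMod n) ^ j * x + c = x).card := by
          congr 1; ext x; simp [hc]
      _ ≤ (Finset.univ.filter fun x : ZMod n => (a : ZMod n) ^ j * x = x).card :=
          fix_count_affine_le _ _
      _ = (Finset.univ.filter fun x => (π0 ^ j) x = x).card := by
          congr 1; ext x; simp [h0]
  exact Nat.le_of_mul_le_mul_right hle hm
end

section
/- Let a and n be coprime positive integers and let π ∈ S(ℤ_n) be the permutation π(x) = a·x. Then t([π]) = n − Σ_{d | n} φ(d)/ord_d(a), where the sum ranges over positive divisors d of n, φ is Euler's totient function, and ord_d(a) is the multiplicative order of a modulo d (with ord_1(a) = 1). -/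
section Helpers
open Finset Equiv MulAction



variable {α : Type*} [Fintype α] [DecidableEq α]

def permZModHom (σ : Equiv.Perm α) (N : ℕ) [NeZero N] (h : σ ^ N = 1) :
    Multiplicative (ZMod N) →* Equiv.Perm α where
  toFun g := σ ^ (Multiplicative.toAdd g).val
  map_one' := by
    show σ ^ (0 : ZMod N).val = 1
    simp [ZMod.val_zero]
  map_mul' g h' := by
    show σ ^ ((Multiplicative.toAdd g) + (Multiplicative.toAdd h')).val = _
    have hmod : ∀ k : ℕ, σ ^ (k % N) = σ ^ k := by
      intro k
      conv_rhs => rw [← Nat.div_add_mod k N]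
      rw [pow_add, pow_mul, h, one_pow, one_mul]
    rw [ZMod.val_add, hmod, pow_add]

lemma cyc_mul_eq_sum (σ : Equiv.Perm α) (N : ℕ) [NeZero N] (h : σ ^ N = 1) :
    cyc σ * N = ∑ j ∈ Finset.range N, #{x : α | (σ ^ j) x = x} := by
  classical
  letI : MulAction (Multiplicative (ZMod N)) α := MulAction.compHom α (permZModHom σ N h)
  have hsmul : ∀ (g : Multiplicative (ZMod N)) (x : α),
      g • x = (σ ^ (Multiplicative.toAdd g).val) x := fun g x => rfl
  letI : ∀ g : Multiplicative (ZMod N), Fintype (fixedBy α g) := fun g => Fintype.ofFinite _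
  letI : Fintype (Quotient (orbitRel (Multiplicative (ZMod N)) α)) := Fintype.ofFinite _
  have hb := MulAction.sum_card_fixedBy_eq_card_orbits_mul_card_group (Multiplicative (ZMod N)) α
  -- identify the quotients
  have hrel : ∀ x y : α, (orbitRel (Multiplicative (ZMod N)) α).r x y ↔ σ.SameCycle x y := by
    intro x y
    constructor
    · rintro ⟨g, rfl⟩
      exact (Equiv.Perm.SameCycle.symm ⟨((Multiplicative.toAdd g).val : ℤ), rfl⟩)
    · intro hxy
      obtain ⟨i, hi, hix⟩ := Equiv.Perm.SameCycle.exists_pow_eq' (α := α) hxy.symm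
      exact ⟨Multiplicative.ofAdd ((i : ZMod N)), by
        show Multiplicative.ofAdd ((i : ZMod N)) • y = x
        rw [hsmul]
        show (σ ^ ((i : ZMod N)).val) y = x
        rw [ZMod.val_natCast]
        have hmod : σ ^ (i % N) = σ ^ i := by
          conv_rhs => rw [← Nat.div_add_mod i N]
          rw [pow_add, pow_mul, h, one_pow, one_mul]
        rw [hmod, hix]⟩
  have hquot : cyc σ = Fintype.card (Quotient (orbitRel (Multiplicative (ZMod N)) α)) := by
    rw [cyc, ← Nat.card_eq_fintype_card]
    exact Nat.card_congr (Quotient.congrRight fun x y => ((hrel x y).symm))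
  have hcardG : Fintype.card (Multiplicative (ZMod N)) = N := by
    simp [ZMod.card]
  rw [hquot]
  rw [show Fintype.card (Quotient (orbitRel (Multiplicative (ZMod N)) α)) * N =
      Fintype.card (Quotient (orbitRel (Multiplicative (ZMod N)) α)) *
        Fintype.card (Multiplicative (ZMod N)) from by rw [hcardG], ← hb]
  have hfix : ∀ g : Multiplicative (ZMod N), Fintype.card (fixedBy α g) =
      #{x : α | (σ ^ (Multiplicative.toAdd g).val) x = x} := by
    intro g
    have hx : ∀ x : α, x ∈ fixedBy α g ↔ (σ ^ (Multiplicative.toAdd g).val) x = x := by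
      intro x; rw [MulAction.mem_fixedBy, hsmul]
    rw [Fintype.card_congr (Equiv.subtypeEquivRight hx), Fintype.card_subtype]
  simp_rw [hfix]
  let e : Multiplicative (ZMod N) ≃ Fin N :=
    { toFun := fun g => ⟨(Multiplicative.toAdd g).val, ZMod.val_lt _⟩
      invFun := fun i => Multiplicative.ofAdd ((i : ℕ) : ZMod N)
      left_inv := fun g => by
        show Multiplicative.ofAdd (((Multiplicative.toAdd g).val : ℕ) : ZMod N) = g
        rw [ZMod.natCast_rightInverse (Multiplicative.toAdd g)]; rfl
      right_inv := fun i => by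
        ext
        simp [ZMod.val_natCast, Nat.mod_eq_of_lt i.isLt] }
  rw [Fintype.sum_equiv e (fun g => #{x : α | (σ ^ (Multiplicative.toAdd g).val) x = x})
    (fun i => #{x : α | (σ ^ (i : ℕ)) x = x}) ?_, ← Fin.sum_univ_eq_sum_range]
  intro g
  rfl

lemma card_filter_dvd_range (m c : ℕ) (hm : 0 < m) :
    #((Finset.range (c * m)).filter (fun j => m ∣ j)) = c := by
  have himg : (Finset.range (c * m)).filter (fun j => m ∣ j)
      = (Finset.range c).image (· * m) := by
    ext j
    simp only [mem_filter, mem_range, mem_image]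
    constructor
    · rintro ⟨hj, i, rfl⟩
      exact ⟨i, by exact lt_of_mul_lt_mul_right (by rwa [mul_comm i m]) (le_of_lt hm), (mul_comm i m)⟩
    · rintro ⟨i, hi, rfl⟩
      exact ⟨by exact Nat.mul_lt_mul_of_lt_of_le hi le_rfl hm, i, mul_comm i m⟩
  rw [himg, Finset.card_image_of_injective _ (fun x y hxy => Nat.eq_of_mul_eq_mul_right hm hxy),
    Finset.card_range]

variable {n : ℕ} [NeZero n]

lemma fix_card_eq (m : ℕ) (hm : 1 ≤ m) :
    #{x : ZMod n | ((m : ℕ) : ZMod n) * x = x}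
      = ∑ d ∈ n.divisors, if d ∣ m - 1 then d.totient else 0 := by
  classical
  have hcond : ∀ x : ZMod n, (((m : ℕ) : ZMod n) * x = x) ↔ addOrderOf x ∣ m - 1 := by
    intro x
    rw [addOrderOf_dvd_iff_nsmul_eq_zero, nsmul_eq_mul, Nat.cast_sub hm, Nat.cast_one,
      sub_mul, one_mul, sub_eq_zero]
  simp_rw [hcond]
  rw [Finset.card_eq_sum_card_fiberwise (f := fun x : ZMod n => addOrderOf x)
    (t := n.divisors) (fun x _ => Nat.mem_divisors.2 ⟨by
      simpa [ZMod.card] using addOrderOf_dvd_card (x := x), NeZero.ne n⟩)]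
  refine Finset.sum_congr rfl fun d hd => ?_
  rcases em (d ∣ m - 1) with hdvd | hdvd
  · rw [if_pos hdvd]
    have : ((univ.filter fun x : ZMod n => addOrderOf x ∣ m - 1).filter
        fun x => addOrderOf x = d) = univ.filter fun x : ZMod n => addOrderOf x = d := by
      ext x
      simp only [mem_filter, mem_univ, true_and]
      exact ⟨fun h => h.2, fun h => ⟨h ▸ hdvd, h⟩⟩
    rw [this]
    have hdn : d ∣ Fintype.card (ZMod n) := by
      rw [ZMod.card]; exact (Nat.mem_divisors.1 hd).1
    exact IsAddCyclic.card_addOrderOf_eq_totient hdn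
  · rw [if_neg hdvd]
    rw [Finset.card_eq_zero]
    ext x
    simp only [mem_filter, mem_univ, true_and, Finset.notMem_empty, iff_false, not_and]
    intro h1 h2
    exact hdvd (h2 ▸ h1)

lemma ord_dvd_iff {a d : ℕ} (hd : 0 < d) (ha : 1 ≤ a) (j : ℕ) :
    d ∣ a ^ j - 1 ↔ orderOf ((a : ZMod d)) ∣ j := by
  haveI : NeZero d := ⟨hd.ne'⟩
  rw [orderOf_dvd_iff_pow_eq_one, ← Nat.cast_pow,
    show (1 : ZMod d) = ((1 : ℕ) : ZMod d) by simp, ZMod.natCast_eq_natCast_iff]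
  constructor
  · intro h
    exact ((Nat.modEq_iff_dvd' (Nat.one_le_pow _ _ ha)).2 h).symm
  · intro h
    exact (Nat.modEq_iff_dvd' (Nat.one_le_pow _ _ ha)).1 h.symm

lemma ord_facts {a d : ℕ} (hd : 0 < d) (hco : Nat.Coprime a d) :
    0 < orderOf ((a : ZMod d)) ∧ orderOf ((a : ZMod d)) ∣ d.totient := by
  haveI : NeZero d := ⟨hd.ne'⟩
  have hpow : ((a : ZMod d)) ^ d.totient = 1 := by
    rw [← Nat.cast_pow, show (1 : ZMod d) = ((1 : ℕ) : ZMod d) by simp,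
      ZMod.natCast_eq_natCast_iff]
    exact Nat.ModEq.pow_totient hco
  have hfin : IsOfFinOrder ((a : ZMod d)) :=
    isOfFinOrder_iff_pow_eq_one.mpr ⟨d.totient, Nat.totient_pos.2 hd, hpow⟩
  exact ⟨hfin.orderOf_pos, orderOf_dvd_of_pow_eq_one hpow⟩

variable {n : ℕ} [NeZero n]

lemma affine_pow (A B : ZMod n) (τ : Equiv.Perm (ZMod n)) (hτ : ∀ x, τ x = A * x + B) (j : ℕ) :
    ∃ C, ∀ x, (τ ^ j) x = A ^ j * x + C := by
  induction j with
  | zero => exact ⟨0, by simp⟩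
  | succ j ih =>
    obtain ⟨C, hC⟩ := ih
    refine ⟨A ^ j * B + C, fun x => ?_⟩
    rw [pow_succ, Equiv.Perm.mul_apply, hτ, hC, pow_succ]
    ring

lemma card_fix_affine_le (A C : ZMod n) :
    #{x : ZMod n | A * x + C = x} ≤ #{x : ZMod n | A * x = x} := by
  classical
  obtain h | ⟨x₀, hx₀⟩ := ({x : ZMod n | A * x + C = x} : Finset _).eq_empty_or_nonempty
  · simp [h]
  · apply Finset.card_le_card_of_injOn (fun x => x - x₀)
    · intro x hx
      simp only [mem_coe, mem_filter, mem_univ, true_and] at hx hx₀ ⊢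
      rw [mul_sub]
      rw [eq_sub_of_add_eq hx, eq_sub_of_add_eq hx₀]
      ring
    · intro x _ y _ hxy
      exact sub_left_inj.1 hxy

end Helpers

open Finset in
theorem tCoset_affine (a n : ℕ) (hn : 0 < n) (ha : 0 < a) (hco : Nat.Coprime a n)
    (π : Equiv.Perm (ZMod n)) (hπ : ∀ x : ZMod n, π x = (a : ZMod n) * x) :
    tCoset π = n - ∑ d ∈ n.divisors, d.totient / orderOf ((a : ZMod d)) := by
  classical
  haveI : NeZero n := ⟨hn.ne'⟩
  set N := Nat.factorial n with hNdef
  have hN0 : 0 < N := Nat.factorial_pos n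
  haveI : NeZero N := ⟨hN0.ne'⟩
  have hord : ∀ τ : Equiv.Perm (ZMod n), τ ^ N = 1 := by
    intro τ
    have h : τ ^ Fintype.card (Equiv.Perm (ZMod n)) = 1 := pow_card_eq_one
    rwa [Fintype.card_perm, ZMod.card] at h
  -- facts about orders mod divisors
  have hdfacts : ∀ d ∈ n.divisors, 0 < orderOf ((a : ZMod d)) ∧
      orderOf ((a : ZMod d)) ∣ d.totient ∧ orderOf ((a : ZMod d)) ∣ N := by
    intro d hd
    obtain ⟨hdvd, -⟩ := Nat.mem_divisors.1 hd
    have hd0 : 0 < d := Nat.pos_of_dvd_of_pos hdvd hn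
    have hcod : Nat.Coprime a d := Nat.Coprime.coprime_dvd_right hdvd hco
    obtain ⟨hpos, hdtot⟩ := ord_facts hd0 hcod
    refine ⟨hpos, hdtot, Nat.dvd_factorial hpos ?_⟩
    calc orderOf ((a : ZMod d)) ≤ d.totient := Nat.le_of_dvd (Nat.totient_pos.2 hd0) hdtot
      _ ≤ d := Nat.totient_le d
      _ ≤ n := Nat.le_of_dvd hn hdvd
  -- fixed points of powers of π
  have hπpow : ∀ (j : ℕ) (x : ZMod n), (π ^ j) x = ((a : ZMod n)) ^ j * x := by
    intro j
    induction j with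
    | zero => intro x; simp
    | succ j ih =>
      intro x
      rw [pow_succ, Equiv.Perm.mul_apply, hπ, ih, pow_succ]
      ring
  have hcj : ∀ j : ℕ, #{x : ZMod n | (π ^ j) x = x}
      = ∑ d ∈ n.divisors, if orderOf ((a : ZMod d)) ∣ j then d.totient else 0 := by
    intro j
    have h1 : ∀ x : ZMod n, ((π ^ j) x = x) ↔ (((a ^ j : ℕ) : ZMod n) * x = x) := by
      intro x; rw [hπpow]; push_cast; rfl
    rw [Finset.filter_congr fun x _ => by rw [h1 x], fix_card_eq (a ^ j) (Nat.one_le_pow _ _ ha)]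
    refine Finset.sum_congr rfl fun d hd => ?_
    obtain ⟨hdvd, -⟩ := Nat.mem_divisors.1 hd
    simp only [ord_dvd_iff (Nat.pos_of_dvd_of_pos hdvd hn) ha j]
  -- the cycle count of π
  have hcycπ : cyc π = ∑ d ∈ n.divisors, d.totient / orderOf ((a : ZMod d)) := by
    have h2 := cyc_mul_eq_sum π N (hord π)
    have h3 : ∑ j ∈ Finset.range N, #{x : ZMod n | (π ^ j) x = x}
        = (∑ d ∈ n.divisors, d.totient / orderOf ((a : ZMod d))) * N := by
      simp_rw [hcj]
      rw [Finset.sum_comm]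
      rw [Finset.sum_mul]
      refine Finset.sum_congr rfl fun d hd => ?_
      obtain ⟨hpos, hdtot, hdN⟩ := hdfacts d hd
      rw [← Finset.sum_filter, Finset.sum_const, smul_eq_mul]
      have hNc : (N / orderOf ((a : ZMod d)) * orderOf ((a : ZMod d))) = N :=
        Nat.div_mul_cancel hdN
      rw [show Finset.range N
          = Finset.range ((N / orderOf ((a : ZMod d))) * orderOf ((a : ZMod d))) by rw [hNc],
        card_filter_dvd_range _ _ hpos]
      calc N / orderOf ((a : ZMod d)) * d.totient
          = (N / orderOf ((a : ZMod d))) *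
            ((d.totient / orderOf ((a : ZMod d))) * orderOf ((a : ZMod d))) := by
            rw [Nat.div_mul_cancel hdtot]
        _ = d.totient / orderOf ((a : ZMod d)) *
            (N / orderOf ((a : ZMod d)) * orderOf ((a : ZMod d))) := by ring
        _ = d.totient / orderOf ((a : ZMod d)) * N := by rw [hNc]
    exact Nat.eq_of_mul_eq_mul_right hN0 (h2.trans h3)
  -- comparison of cycle counts
  have hle : ∀ k : ZMod n, cyc (π * Equiv.addRight k) ≤ cyc π := by
    intro k
    set τ := π * Equiv.addRight k with hτdef
    have hτ : ∀ x : ZMod n, τ x = (a : ZMod n) * x + (a : ZMod n) * k := by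
      intro x
      show π (Equiv.addRight k x) = _
      rw [Equiv.coe_addRight, hπ, mul_add]
    have h1 := cyc_mul_eq_sum τ N (hord τ)
    have h2 := cyc_mul_eq_sum π N (hord π)
    have hmul : cyc τ * N ≤ cyc π * N := by
      rw [h1, h2]
      refine Finset.sum_le_sum fun j _ => ?_
      obtain ⟨C, hC⟩ := affine_pow ((a : ZMod n)) ((a : ZMod n) * k) τ hτ j
      calc #{x : ZMod n | (τ ^ j) x = x}
          = #{x : ZMod n | (a : ZMod n) ^ j * x + C = x} := by
            refine congrArg Finset.card (Finset.filter_congr fun x _ => by rw [hC x])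
        _ ≤ #{x : ZMod n | (a : ZMod n) ^ j * x = x} := card_fix_affine_le _ _
        _ = #{x : ZMod n | (π ^ j) x = x} := by
            refine congrArg Finset.card (Finset.filter_congr fun x _ => by rw [hπpow j x])
    exact Nat.le_of_mul_le_mul_right hmul hN0
  -- compute the infimum
  have hmem : tPerm π ∈ { m : ℕ | ∃ k : ZMod n, m = tPerm (π * Equiv.addRight k) } := by
    refine ⟨0, ?_⟩
    congr 1
    ext x
    simp
  apply le_antisymm
  · calc sInf { m : ℕ | ∃ k : ZMod n, m = tPerm (π * Equiv.addRight k) }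
        ≤ tPerm π := Nat.sInf_le hmem
      _ = n - ∑ d ∈ n.divisors, d.totient / orderOf ((a : ZMod d)) := by
          rw [tPerm, hcycπ]
  · refine le_csInf ⟨_, hmem⟩ ?_
    rintro m ⟨k, rfl⟩
    rw [tPerm, ← hcycπ]
    exact Nat.sub_le_sub_left (hle k) n
end
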